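/- arXiv:1112.3423 — 10 statements merged into one kernel-verified Lean document; each statement's English description precedes it below -/
import Mathlib

section
/- Let V be a dissipative quadratic stochastic operator on S^{m-1} with coefficients p_{ij,k}. Then for every i ∈ {1,…,m} there exists k ∈ {1,…,m} such that p_{ii,k} = 1 and p_{ii,l} = 0 for all l ≠ k; equivalently, the image Ve_i of the i-th vertex of the simplex is itself a vertex of the simplex. -/
open Finset Filter Topology

/-- `Majorizes y x` means `x ≺ y`: for every `k`, the sum of the `k` largest components of
`x` is at most the sum of the `k` largest components of `y`.  This is expressed via the
standard equivalent form: every subset-sum of `x` is dominated by some subset-sum of `y`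
over a subset of the same cardinality (the maximum of the latter over subsets of
cardinality `k` being exactly the sum of the `k` largest components of `y`). -/
def Majorizes {m : ℕ} (y x : Fin m → ℝ) : Prop :=
  ∀ A : Finset (Fin m), ∃ B : Finset (Fin m),
    B.card = A.card ∧ ∑ i ∈ A, x i ≤ ∑ i ∈ B, y i

/-- The quadratic operator `(Vx)_k = ∑_{i,j} p_{ij,k} x_i x_j` with heredity
coefficients `p`. -/
def QSO {m : ℕ} (p : Fin m → Fin m → Fin m → ℝ) (x : Fin m → ℝ) : Fin m → ℝ :=
  fun k => ∑ i, ∑ j, p i j k * x i * x j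

/-- Conditions on heredity coefficients: symmetry, nonnegativity, stochasticity. -/
def IsQSOCoeff {m : ℕ} (p : Fin m → Fin m → Fin m → ℝ) : Prop :=
  (∀ i j k, p i j k = p j i k) ∧ (∀ i j k, 0 ≤ p i j k) ∧ (∀ i j, ∑ k, p i j k = 1)

/-- Dissipativity of the q.s.o.: `V x ≻ x` for every `x` in the simplex. -/
def IsDissipative {m : ℕ} (p : Fin m → Fin m → Fin m → ℝ) : Prop :=
  ∀ x ∈ stdSimplex ℝ (Fin m), Majorizes (QSO p x) x

/-- The `k`-th vertex of the simplex (the `k`-th standard basis vector). -/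
def vertex {m : ℕ} (k : Fin m) : Fin m → ℝ := fun j => if j = k then 1 else 0

/-- The ω-limit set of the trajectory of `x` under `V`: the set of all limit points of
the sequence `(Vⁿ x)ₙ`. -/
def omegaLimitSet {m : ℕ} (V : (Fin m → ℝ) → Fin m → ℝ) (x : Fin m → ℝ) :
    Set (Fin m → ℝ) :=
  {y | ∃ φ : ℕ → ℕ, StrictMono φ ∧ Tendsto (fun n => V^[φ n] x) atTop (𝓝 y)}

lemma qso_vertex {m : ℕ} (p : Fin m → Fin m → Fin m → ℝ) (i k : Fin m) :
    QSO p (vertex i) k = p i i k := by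
  simp [QSO, vertex, Finset.mul_sum, mul_ite, Finset.sum_ite_eq']

/-- for a dissipative q.s.o., each `V eᵢ` is a vertex: there is `k` with
`p_{ii,k} = 1` and `p_{ii,l} = 0` for `l ≠ k`. -/
theorem stmt0 {m : ℕ} (p : Fin m → Fin m → Fin m → ℝ)
    (hp : IsQSOCoeff p) (hd : IsDissipative p) :
    ∀ i : Fin m, ∃ k : Fin m,
      p i i k = 1 ∧ (∀ l : Fin m, l ≠ k → p i i l = 0) ∧
      QSO p (vertex i) = vertex k := by
  obtain ⟨hsym, hnn, hsum⟩ := hp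
  intro i
  have hvx : vertex i ∈ stdSimplex ℝ (Fin m) := by
    constructor
    · intro j; by_cases h : j = i <;> simp [vertex, h]
    · simp [vertex, Finset.sum_ite_eq']
  obtain ⟨B, hBcard, hBle⟩ := hd (vertex i) hvx {i}
  simp only [Finset.card_singleton] at hBcard
  obtain ⟨k, rfl⟩ := Finset.card_eq_one.mp hBcard
  have h1 : (1 : ℝ) ≤ p i i k := by
    simpa [vertex, qso_vertex] using hBle
  have hle : p i i k ≤ 1 := by
    rw [← hsum i i]
    exact Finset.single_le_sum (fun l _ => hnn i i l) (Finset.mem_univ k)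
  have hk : p i i k = 1 := le_antisymm hle h1
  have hzero : ∀ l : Fin m, l ≠ k → p i i l = 0 := by
    intro l hl
    have := Finset.sum_eq_sum_sdiff_singleton_add (Finset.mem_univ k)
      (fun j => p i i j)
    rw [hsum i i, hk] at this
    have hrest : ∑ j ∈ Finset.univ \ {k}, p i i j = 0 := by linarith
    have := (Finset.sum_eq_zero_iff_of_nonneg
      (fun j _ => hnn i i j)).mp hrest l (by simp [hl])
    exact this
  refine ⟨k, hk, hzero, ?_⟩
  funext l
  rw [qso_vertex]
  by_cases h : l = k
  · simp [vertex, h, hk]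
  · simp [vertex, h, hzero l h]
end

section
/- Let V be a dissipative quadratic stochastic operator on S^{m-1} with coefficients p_{ij,k}, and suppose p_{jj,k₀} = 1 for some indices j, k₀. Then for every i ∈ {1,…,m} one has p_{ij,k₀} ≥ 1/2, and moreover p_{ij,k₀} = max_{1 ≤ t ≤ m} p_{ij,t}. -/
open Finset Filter Topology

lemma coeff_le_one {m : ℕ} {p : Fin m → Fin m → Fin m → ℝ} (hp : IsQSOCoeff p)
    (a b k : Fin m) : p a b k ≤ 1 := by
  have := hp.2.2 a b
  calc p a b k ≤ ∑ t, p a b t :=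
        Finset.single_le_sum (fun t _ => hp.2.1 a b t) (Finset.mem_univ k)
    _ = 1 := this

lemma other_zero {m : ℕ} {p : Fin m → Fin m → Fin m → ℝ} (hp : IsQSOCoeff p)
    {a b k₀ : Fin m} (h : p a b k₀ = 1) {t : Fin m} (ht : t ≠ k₀) : p a b t = 0 := by
  have hsum := hp.2.2 a b
  have h1 : ∑ s ∈ Finset.univ.erase k₀, p a b s = 0 := by
    have h2 : p a b k₀ + ∑ s ∈ Finset.univ.erase k₀, p a b s = 1 := by
      rw [Finset.add_sum_erase _ _ (Finset.mem_univ k₀)]; exact hsum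
    linarith
  have := (Finset.sum_eq_zero_iff_of_nonneg (fun s _ => hp.2.1 a b s)).mp h1 t
    (Finset.mem_erase.mpr ⟨ht, Finset.mem_univ t⟩)
  exact this

/-- if `p_{jj,k₀} = 1` then `p_{ij,k₀} ≥ 1/2` and `p_{ij,k₀}` is the
maximal component of `(p_{ij,1}, …, p_{ij,m})`, for every `i`. -/
theorem stmt1 {m : ℕ} (p : Fin m → Fin m → Fin m → ℝ)
    (hp : IsQSOCoeff p) (hd : IsDissipative p)
    (j k₀ : Fin m) (h : p j j k₀ = 1) :
    ∀ i : Fin m, 1 / 2 ≤ p i j k₀ ∧ ∀ t : Fin m, p i j t ≤ p i j k₀ := by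
  intro i
  by_cases hij : i = j
  · subst hij
    exact ⟨by rw [h]; norm_num, fun t => (coeff_le_one hp i i t).trans_eq h.symm⟩
  -- key estimate for every small l
  have key : ∀ l : ℝ, 0 < l → l ≤ 1/4 → 1/2 - 2*l/3 ≤ p i j k₀ := by
    intro l hl0 hl4
    set x : Fin m → ℝ := fun t => (if t = i then l else 0) + (if t = j then 1 - l else 0)
      with hx
    have hxmem : x ∈ stdSimplex ℝ (Fin m) := by
      constructor
      · intro t
        dsimp [x]
        split <;> split <;> nlinarith
      · simp [x, Finset.sum_add_distrib, Finset.sum_ite_eq']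
    have hQ : ∀ k, QSO p x k
        = l*l * p i i k + 2*(l*(1-l)) * p i j k + (1-l)*(1-l) * p j j k := by
      intro k
      have hsym : p j i k = p i j k := hp.1 j i k
      simp only [QSO, hx, mul_add, add_mul, mul_ite, ite_mul, mul_zero, zero_mul, mul_one,
        Finset.sum_add_distrib, Finset.sum_ite_eq', Finset.mem_univ, if_true]
      simp [hij, Ne.symm hij, hsym]
      ring
    obtain ⟨B, hBcard, hBle⟩ := hd x hxmem {j}
    rw [Finset.card_singleton] at hBcard
    obtain ⟨b, rfl⟩ := Finset.card_eq_one.mp hBcard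
    simp only [Finset.sum_singleton] at hBle
    have hxj : x j = 1 - l := by simp [x, Ne.symm hij]
    rw [hxj] at hBle
    -- b must equal k₀
    have hb : b = k₀ := by
      by_contra hbne
      have hz : p j j b = 0 := other_zero hp h hbne
      have := hQ b
      rw [hz] at this
      have h1 : p i i b ≤ 1 := coeff_le_one hp i i b
      have h2 : p i j b ≤ 1 := coeff_le_one hp i j b
      have hBle' := hBle.trans_eq this
      have e1 : l*l*p i i b ≤ l*l := by nlinarith
      have e2 : 2*(l*(1-l))*p i j b ≤ 2*(l*(1-l)) := by nlinarith [mul_nonneg hl0.le (by linarith : (0:ℝ) ≤ 1-l)]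
      nlinarith
    rw [hb] at hBle
    have hQk := hQ k₀
    rw [h] at hQk
    have hBle' := hBle.trans_eq hQk
    have h1 : p i i k₀ ≤ 1 := coeff_le_one hp i i k₀
    have h0 : 0 ≤ p i i k₀ := hp.2.1 i i k₀
    have hpij0 : 0 ≤ p i j k₀ := hp.2.1 i j k₀
    have key1 : l - 2*l^2 ≤ 2*(l*(1-l)) * p i j k₀ := by nlinarith
    nlinarith [mul_pos hl0 (by linarith : (0:ℝ) < 1 - l)]
  have half : 1/2 ≤ p i j k₀ := by
    refine le_of_forall_pos_le_add ?_
    intro ε hε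
    rcases le_or_gt ε (1/4) with hc | hc
    · have := key ε hε hc; linarith
    · have := key (1/4) (by norm_num) le_rfl; linarith
  refine ⟨half, fun t => ?_⟩
  by_cases ht : t = k₀
  · subst ht; exact le_rfl
  · have hsum := hp.2.2 i j
    have h1 : p i j t + p i j k₀ ≤ ∑ s, p i j s := by
      have : ({t, k₀} : Finset (Fin m)) ⊆ Finset.univ := Finset.subset_univ _
      calc p i j t + p i j k₀ = ∑ s ∈ ({t, k₀} : Finset (Fin m)), p i j s := by
            rw [Finset.sum_pair ht]
        _ ≤ ∑ s, p i j s := Finset.sum_le_sum_of_subset_of_nonneg this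
            (fun s _ _ => hp.2.1 i j s)
    rw [hsum] at h1
    linarith
end

section
/- Let m ≥ 3 and let V be a dissipative quadratic stochastic operator on S^{m-1} with coefficients p_{ij,k}. Then for all i, j ∈ {1,…,m} the vector (p_{ij,1}, …, p_{ij,m}) has at most two nonzero components; equivalently, there exist indices k₁ ≠ k₂ with p_{ij,k₁} + p_{ij,k₂} = 1. -/
open Finset Filter Topology

/-- for `m ≥ 3` and a dissipative q.s.o., each vector
`(p_{ij,1}, …, p_{ij,m})` has at most two nonzero components; equivalently two of its
components already sum to `1`. -/
theorem stmt2 {m : ℕ} (hm : 3 ≤ m) (p : Fin m → Fin m → Fin m → ℝ)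
    (hp : IsQSOCoeff p) (hd : IsDissipative p) :
    ∀ i j : Fin m,
      (Finset.univ.filter fun k => p i j k ≠ 0).card ≤ 2 ∧
      ∃ k₁ k₂ : Fin m, k₁ ≠ k₂ ∧ p i j k₁ + p i j k₂ = 1 := by
  intro i j
  set x : Fin m → ℝ := fun k =>
    (if k = i then (1:ℝ)/2 else 0) + (if k = j then (1:ℝ)/2 else 0) with hxdef
  have hxnn : ∀ k, 0 ≤ x k := by
    intro k; simp only [hxdef]; split_ifs <;> norm_num
  have hxsum : ∑ k, x k = 1 := by
    simp [hxdef, Finset.sum_add_distrib, Finset.sum_ite_eq']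
    norm_num
  have hx : x ∈ stdSimplex ℝ (Fin m) := ⟨hxnn, hxsum⟩
  have hxij : (1:ℝ)/4 ≤ x i * x j := by
    simp only [hxdef]
    by_cases h : i = j
    · simp [h]
      norm_num
    · have hji : ¬ j = i := fun h' => h h'.symm
      simp only [if_pos rfl, if_neg h, if_neg hji]
      norm_num
  have hVnn : ∀ k, 0 ≤ QSO p x k := by
    intro k
    refine Finset.sum_nonneg fun a _ => Finset.sum_nonneg fun b _ => ?_
    exact mul_nonneg (mul_nonneg (hp.2.1 a b k) (hxnn a)) (hxnn b)
  have htot : ∑ k, QSO p x k = 1 := by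
    unfold QSO
    calc ∑ k, ∑ a, ∑ b, p a b k * x a * x b
        = ∑ a, ∑ b, (∑ k, p a b k) * (x a * x b) := by
          rw [Finset.sum_comm]
          refine Finset.sum_congr rfl fun a _ => ?_
          rw [Finset.sum_comm]
          refine Finset.sum_congr rfl fun b _ => ?_
          rw [Finset.sum_mul]
          exact Finset.sum_congr rfl fun k _ => by ring
      _ = ∑ a, ∑ b, x a * x b := by simp [hp.2.2]
      _ = (∑ a, x a) * (∑ b, x b) := by rw [← Finset.sum_mul_sum]
      _ = 1 := by rw [hxsum]; ring
  obtain ⟨B, hBcard, hB⟩ := hd x hx {i, j}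
  have hA : ∑ k ∈ ({i, j} : Finset (Fin m)), x k = 1 := by
    by_cases h : i = j
    · simp [h, hxdef]
      norm_num
    · rw [Finset.sum_pair h]
      simp only [hxdef, if_pos rfl, if_neg h, if_neg (Ne.symm h)]
      norm_num
  rw [hA] at hB
  have hle : ∑ k ∈ B, QSO p x k ≤ 1 := by
    rw [← htot]
    exact Finset.sum_le_sum_of_subset_of_nonneg (Finset.subset_univ B)
      fun k _ _ => hVnn k
  have hcompl : ∑ k ∈ Bᶜ, QSO p x k = 0 := by
    have := Finset.sum_add_sum_compl B (QSO p x)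
    have h0 : 0 ≤ ∑ k ∈ Bᶜ, QSO p x k := Finset.sum_nonneg fun k _ => hVnn k
    linarith [this.symm ▸ htot]
  have hzero : ∀ k, k ∉ B → p i j k = 0 := by
    intro k hk
    have hk' : QSO p x k = 0 := by
      have := (Finset.sum_eq_zero_iff_of_nonneg fun a _ => hVnn a).mp hcompl k
        (Finset.mem_compl.mpr hk)
      exact this
    unfold QSO at hk'
    have h2 := (Finset.sum_eq_zero_iff_of_nonneg fun a _ =>
      Finset.sum_nonneg fun b _ =>
        mul_nonneg (mul_nonneg (hp.2.1 a b k) (hxnn a)) (hxnn b)).mp hk' i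
      (Finset.mem_univ i)
    have h3 := (Finset.sum_eq_zero_iff_of_nonneg fun b _ =>
      mul_nonneg (mul_nonneg (hp.2.1 i b k) (hxnn i)) (hxnn b)).mp h2 j
      (Finset.mem_univ j)
    have hpos : 0 < x i * x j := lt_of_lt_of_le (by norm_num) hxij
    rw [mul_assoc] at h3
    rcases mul_eq_zero.mp h3 with h | h
    · exact h
    · exact absurd h (ne_of_gt hpos)
  have hcard2 : ({i, j} : Finset (Fin m)).card ≤ 2 := by
    refine le_trans (Finset.card_insert_le i {j}) ?_
    simp
  have hBle : B.card ≤ 2 := hBcard ▸ hcard2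
  obtain ⟨C, hBC, hCcard⟩ := Finset.exists_superset_card_eq hBle
    (by simp only [Fintype.card_fin]; omega)
  obtain ⟨k₁, k₂, hne, hC⟩ := Finset.card_eq_two.mp hCcard
  have hsumC : ∑ k ∈ C, p i j k = 1 := by
    rw [Finset.sum_subset (Finset.subset_univ C)
      fun k _ hk => hzero k fun hkB => hk (hBC hkB)]
    exact hp.2.2 i j
  rw [hC, Finset.sum_pair hne] at hsumC
  refine ⟨?_, k₁, k₂, hne, hsumC⟩
  have hsub : Finset.univ.filter (fun k => p i j k ≠ 0) ⊆ B := by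
    intro k hk
    rw [Finset.mem_filter] at hk
    by_contra hkB
    exact hk.2 (hzero k hkB)
  exact le_trans (Finset.card_le_card hsub) hBle
end

section
/- Let V be a dissipative quadratic stochastic operator on S^{m-1} with coefficients p_{ij,k} such that p_{ii,1} = 1 for all i = 1,…,m. Then V is regular and its unique fixed point is the vertex e₁; that is, Fix(V) = {e₁} and for every x ∈ S^{m-1} the trajectory Vⁿx converges to e₁ as n → ∞. -/
open Finset Filter Topology

/-- If nonnegative values sum to 1 and one of them is 1, the others vanish. -/
lemma sum_one_forces {m : ℕ} {f : Fin m → ℝ} (hnn : ∀ k, 0 ≤ f k)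
    (hsum : ∑ k, f k = 1) {o : Fin m} (ho : f o = 1) : ∀ k, k ≠ o → f k = 0 := by
  intro k hk
  have h1 : ∑ j ∈ Finset.univ.erase o, f j = 0 := by
    rw [Finset.sum_erase_eq_sub (Finset.mem_univ o), hsum, ho]; ring
  exact (Finset.sum_eq_zero_iff_of_nonneg (fun j _ => hnn j)).mp h1 k
    (Finset.mem_erase.mpr ⟨hk, Finset.mem_univ k⟩)

/-- The QSO maps the simplex into itself. -/
lemma qso_mem_simplex {m : ℕ} (p : Fin m → Fin m → Fin m → ℝ) (hp : IsQSOCoeff p)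
    {x : Fin m → ℝ} (hx : x ∈ stdSimplex ℝ (Fin m)) : QSO p x ∈ stdSimplex ℝ (Fin m) := by
  obtain ⟨hsym, hnn, hsum⟩ := hp
  obtain ⟨hxnn, hxsum⟩ := hx
  constructor
  · intro k
    exact Finset.sum_nonneg fun i _ => Finset.sum_nonneg fun j _ =>
      mul_nonneg (mul_nonneg (hnn i j k) (hxnn i)) (hxnn j)
  · have h : ∑ k, QSO p x k = ∑ i, ∑ j, x i * x j := by
      unfold QSO
      rw [Finset.sum_comm]
      refine Finset.sum_congr rfl fun i _ => ?_
      rw [Finset.sum_comm]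
      refine Finset.sum_congr rfl fun j _ => ?_
      calc ∑ k, p i j k * x i * x j = (∑ k, p i j k) * (x i * x j) := by
            rw [Finset.sum_mul]; exact Finset.sum_congr rfl fun k _ => by ring
        _ = x i * x j := by rw [hsum i j, one_mul]
    rw [h, ← Finset.sum_mul_sum, hxsum, one_mul]

/-- Key lemma: for a dissipative q.s.o. with `p_{ii,1} = 1`, all `p_{ij,1} ≥ 1/2`. -/
lemma key_half {m : ℕ} (hm : 0 < m) (p : Fin m → Fin m → Fin m → ℝ)
    (hp : IsQSOCoeff p) (hd : IsDissipative p)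
    (h1 : ∀ i : Fin m, p i i ⟨0, hm⟩ = 1) (i j : Fin m) :
    (1:ℝ)/2 ≤ p i j ⟨0, hm⟩ := by
  obtain ⟨hsym, hnn, hsum⟩ := hp
  set o : Fin m := ⟨0, hm⟩ with ho
  have hdiag : ∀ a k, k ≠ o → p a a k = 0 := fun a k hk =>
    sum_one_forces (fun k => hnn a a k) (hsum a a) (h1 a) k hk
  by_cases hij : i = j
  · subst hij; rw [h1]; norm_num
  by_contra hc
  push_neg at hc
  set c := p i j o with hcdef
  have hc0 : 0 ≤ c := hnn i j o
  set u : ℝ := 1 - c with hu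
  have hu1 : 1/2 < u := by rw [hu]; linarith
  have hu0 : 0 < u := by linarith
  set t : ℝ := (1/(2*u) + 1)/2 with htdef
  have hut : 2*u*t = 1/2 + u := by rw [htdef]; field_simp
  have hinv : 0 < 1/(2*u) := by positivity
  have hinv1 : 1/(2*u) < 1 := by rw [div_lt_one (by linarith)]; linarith
  have ht1 : 1/2 < t := by rw [htdef]; linarith
  have ht2 : t < 1 := by rw [htdef]; linarith
  set x : Fin m → ℝ := fun a => if a = i then t else if a = j then 1 - t else 0 with hxdef
  have sum_two : ∀ g : Fin m → ℝ, ∑ b, g b * x b = g i * t + g j * (1 - t) := by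
    intro g
    have h : ∀ b, g b * x b
        = (if b = i then g i * t else 0) + (if b = j then g j * (1-t) else 0) := by
      intro b
      by_cases hb1 : b = i
      · subst hb1; simp [hxdef, hij]
      · by_cases hb2 : b = j
        · subst hb2; simp [hxdef, hb1]
        · simp [hxdef, hb1, hb2]
    rw [Finset.sum_congr rfl fun b _ => h b, Finset.sum_add_distrib]
    simp
  have hxs : x ∈ stdSimplex ℝ (Fin m) := by
    constructor
    · intro a; rw [hxdef]; dsimp only; split_ifs <;> linarith
    · have h2 := sum_two (fun _ => 1)
      simp only [one_mul] at h2
      rw [h2]; ring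
  have hq : ∀ k, QSO p x k =
      (p i i k * t + p i j k * (1-t)) * t + (p j i k * t + p j j k * (1-t)) * (1-t) := by
    intro k
    have step1 : QSO p x k = ∑ a, (p a i k * t + p a j k * (1-t)) * x a := by
      unfold QSO
      refine Finset.sum_congr rfl fun a _ => ?_
      calc ∑ b, p a b k * x a * x b = p a i k * x a * t + p a j k * x a * (1 - t) :=
            sum_two (fun b => p a b k * x a)
        _ = (p a i k * t + p a j k * (1-t)) * x a := by ring
    rw [step1, sum_two]
  obtain ⟨B, hBcard, hB⟩ := hd x hxs {i}
  rw [Finset.card_singleton] at hBcard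
  obtain ⟨k, rfl⟩ := Finset.card_eq_one.mp hBcard
  rw [Finset.sum_singleton, Finset.sum_singleton] at hB
  have hxi : x i = t := by simp [hxdef]
  rw [hxi, hq k] at hB
  by_cases hk : k = o
  · subst hk
    rw [h1 i, h1 j, hsym j i] at hB
    -- hB : t ≤ (1*t + c*(1-t))*t + (c*t + 1*(1-t))*(1-t)
    nlinarith [hB, hut, hu1, ht1, ht2, hu0]
  · rw [hdiag i k hk, hdiag j k hk, hsym j i] at hB
    have hpk : p i j k ≤ 1 := by
      have h := Finset.single_le_sum (f := fun k => p i j k)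
        (fun k _ => hnn i j k) (Finset.mem_univ k)
      rwa [hsum i j] at h
    nlinarith [hB, hpk, ht1, ht2, hnn i j k,
      mul_pos (lt_trans one_half_pos ht1) (by linarith : (0:ℝ) < 1 - t)]

/-- Growth of the first coordinate. -/
lemma grow {m : ℕ} (hm : 0 < m) (p : Fin m → Fin m → Fin m → ℝ)
    (hp : IsQSOCoeff p) (hd : IsDissipative p)
    (h1 : ∀ i : Fin m, p i i ⟨0, hm⟩ = 1) {x : Fin m → ℝ}
    (hx : x ∈ stdSimplex ℝ (Fin m)) :
    (1 + x ⟨0, hm⟩ ^ 2) / 2 ≤ QSO p x ⟨0, hm⟩ := by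
  have hkey : ∀ i j, (1:ℝ)/2 ≤ p i j ⟨0, hm⟩ := key_half hm p hp hd h1
  obtain ⟨hsym, hnn, hsum⟩ := hp
  obtain ⟨hxnn, hxsum⟩ := hx
  set o : Fin m := ⟨0, hm⟩ with ho
  have step1 : ∑ a, ∑ b, (if a = b then (1:ℝ) else 1/2) * x a * x b ≤ QSO p x o := by
    unfold QSO
    refine Finset.sum_le_sum fun a _ => Finset.sum_le_sum fun b _ => ?_
    have hab : (if a = b then (1:ℝ) else 1/2) ≤ p a b o := by
      split_ifs with h
      · subst h; rw [h1 a]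
      · exact hkey a b
    have hxx : 0 ≤ x a * x b := mul_nonneg (hxnn a) (hxnn b)
    calc (if a = b then (1:ℝ) else 1/2) * x a * x b
        = (if a = b then (1:ℝ) else 1/2) * (x a * x b) := by ring
      _ ≤ p a b o * (x a * x b) := mul_le_mul_of_nonneg_right hab hxx
      _ = p a b o * x a * x b := by ring
  have e0 : ∀ a b, (if a = b then (1:ℝ) else 1/2) * x a * x b
      = 1/2 * (x a * x b) + 1/2 * (if b = a then x a * x b else 0) := by
    intro a b
    by_cases h : a = b
    · subst h; simp; ring
    · rw [if_neg h, if_neg (Ne.symm h)]; ring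
  have e1 : ∑ a, ∑ b, (1/2 : ℝ) * (x a * x b) = 1/2 := by
    have h : ∑ a, ∑ b, (1/2 : ℝ) * (x a * x b) = 1/2 * ∑ a, ∑ b, x a * x b := by
      rw [Finset.mul_sum]
      exact Finset.sum_congr rfl fun a _ => by rw [Finset.mul_sum]
    rw [h, ← Finset.sum_mul_sum, hxsum]; norm_num
  have e2 : ∑ a, ∑ b, (1/2:ℝ) * (if b = a then x a * x b else 0) = 1/2 * ∑ a, x a ^ 2 := by
    rw [Finset.mul_sum]
    refine Finset.sum_congr rfl fun a _ => ?_
    rw [← Finset.mul_sum, Finset.sum_ite_eq' Finset.univ a (fun b => x a * x b)]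
    simp [sq]
  have step2 : ∑ a, ∑ b, (if a = b then (1:ℝ) else 1/2) * x a * x b
      = 1/2 + 1/2 * ∑ a, x a ^ 2 := by
    calc ∑ a, ∑ b, (if a = b then (1:ℝ) else 1/2) * x a * x b
        = ∑ a, ∑ b, (1/2 * (x a * x b) + 1/2 * (if b = a then x a * x b else 0)) :=
          Finset.sum_congr rfl fun a _ => Finset.sum_congr rfl fun b _ => e0 a b
      _ = (∑ a, ∑ b, (1/2 : ℝ) * (x a * x b))
          + ∑ a, ∑ b, (1/2:ℝ) * (if b = a then x a * x b else 0) := by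
          simp only [Finset.sum_add_distrib]
      _ = 1/2 + 1/2 * ∑ a, x a ^ 2 := by rw [e1, e2]
  have hsq : x o ^ 2 ≤ ∑ a, x a ^ 2 :=
    Finset.single_le_sum (fun a _ => sq_nonneg (x a)) (Finset.mem_univ o)
  rw [step2] at step1
  linarith

/-- if `p_{ii,1} = 1` for all `i`, the dissipative q.s.o. is regular with
unique fixed point the vertex `e₁`. -/
theorem stmt3 {m : ℕ} (hm : 0 < m) (p : Fin m → Fin m → Fin m → ℝ)
    (hp : IsQSOCoeff p) (hd : IsDissipative p)
    (h1 : ∀ i : Fin m, p i i ⟨0, hm⟩ = 1) :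
    {x ∈ stdSimplex ℝ (Fin m) | QSO p x = x} = {vertex ⟨0, hm⟩} ∧
    ∀ x ∈ stdSimplex ℝ (Fin m),
      Tendsto (fun n => (QSO p)^[n] x) atTop (𝓝 (vertex (⟨0, hm⟩ : Fin m))) := by
  have hsym := hp.1
  have hnn := hp.2.1
  have hsum := hp.2.2
  set o : Fin m := ⟨0, hm⟩ with ho
  have hdiag : ∀ a k, k ≠ o → p a a k = 0 := fun a k hk =>
    sum_one_forces (fun k => hnn a a k) (hsum a a) (h1 a) k hk
  have hvsimp : vertex o ∈ stdSimplex ℝ (Fin m) := by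
    constructor
    · intro a; unfold vertex; split_ifs <;> norm_num
    · unfold vertex; rw [Finset.sum_ite_eq' Finset.univ o (fun _ => (1:ℝ))]
      simp
  have hVv : QSO p (vertex o) = vertex o := by
    funext k
    have h : QSO p (vertex o) k = p o o k := by
      unfold QSO vertex
      simp [mul_ite, ite_mul, Finset.sum_ite_eq', Finset.sum_ite_eq]
    rw [h]
    unfold vertex
    by_cases hk : k = o
    · subst hk; rw [if_pos rfl, h1 o]
    · rw [if_neg hk, hdiag o k hk]
  constructor
  · ext y
    simp only [Set.mem_setOf_eq, Set.mem_singleton_iff]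
    constructor
    · rintro ⟨hy, hfix⟩
      have hyo : y o = 1 := by
        have hg := grow hm p hp hd h1 hy
        rw [← ho] at hg
        have heq : QSO p y o = y o := by rw [hfix]
        rw [heq] at hg
        nlinarith [hg, sq_nonneg (y o - 1)]
      funext k
      unfold vertex
      by_cases hk : k = o
      · subst hk; rw [if_pos rfl, hyo]
      · rw [if_neg hk]
        exact sum_one_forces hy.1 hy.2 hyo k hk
    · rintro rfl
      exact ⟨hvsimp, hVv⟩
  · intro x hx
    have hiter : ∀ n, (QSO p)^[n] x ∈ stdSimplex ℝ (Fin m) := by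
      intro n
      induction n with
      | zero => simpa using hx
      | succ n ih => rw [Function.iterate_succ_apply']; exact qso_mem_simplex p hp ih
    set a : ℕ → ℝ := fun n => (QSO p)^[n] x o with ha
    have hstep : ∀ n, (1 + a n ^ 2)/2 ≤ a (n+1) := by
      intro n
      have hg := grow hm p hp hd h1 (hiter n)
      rw [← ho] at hg
      simpa [ha, Function.iterate_succ_apply'] using hg
    have hmono : Monotone a := monotone_nat_of_le_succ fun n => by
      nlinarith [hstep n, sq_nonneg (a n - 1)]
    have hbd : ∀ n, a n ≤ 1 := by
      intro n
      have h := hiter n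
      have hs := Finset.single_le_sum (fun k _ => h.1 k) (Finset.mem_univ o)
      rwa [h.2] at hs
    have hbdd : BddAbove (Set.range a) := ⟨1, by rintro _ ⟨n, rfl⟩; exact hbd n⟩
    have hLlim : Tendsto a atTop (𝓝 (⨆ n, a n)) := tendsto_atTop_ciSup hmono hbdd
    set L : ℝ := ⨆ n, a n with hLdef
    have hL1 : L = 1 := by
      have h2 : Tendsto (fun n => a (n+1)) atTop (𝓝 L) :=
        hLlim.comp (tendsto_add_atTop_nat 1)
      have h3 : Tendsto (fun n => (1 + a n ^ 2)/2) atTop (𝓝 ((1 + L^2)/2)) :=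
        (tendsto_const_nhds.add (hLlim.pow 2)).div_const 2
      have h4 : (1 + L^2)/2 ≤ L := le_of_tendsto_of_tendsto' h3 h2 hstep
      nlinarith [h4, sq_nonneg (L - 1)]
    have hao : Tendsto a atTop (𝓝 1) := hL1 ▸ hLlim
    rw [tendsto_pi_nhds]
    intro k
    by_cases hk : k = o
    · subst hk
      have hv : vertex o o = 1 := by unfold vertex; rw [if_pos rfl]
      rw [hv]
      exact hao
    · have hv : vertex o k = 0 := by unfold vertex; rw [if_neg hk]
      rw [hv]
      have hub : ∀ n, (QSO p)^[n] x k ≤ 1 - a n := by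
        intro n
        have h := hiter n
        have hs := Finset.sum_le_sum_of_subset_of_nonneg
          (Finset.subset_univ ({o, k} : Finset (Fin m))) (fun j _ _ => h.1 j)
        rw [Finset.sum_pair (Ne.symm hk), h.2] at hs
        linarith
      have hto : Tendsto (fun n => 1 - a n) atTop (𝓝 0) := by
        have h := Tendsto.const_sub (1:ℝ) hao
        simpa using h
      exact squeeze_zero (fun n => (hiter n).1 k) hub hto
end

section
/- Let V be a dissipative quadratic stochastic operator on S^{m-1} with coefficients p_{ij,k} such that p_{ii,1} = 1 for all i ≠ 2 and p_{22,2} = 1. Then V has infinitely many fixed points, and for every initial point x⁰ ∈ S^{m-1} the ω-limit set of its trajectory satisfies ω(x⁰) ⊆ {λe₁ + (1−λ)e₂ : 0 ≤ λ ≤ 1}, the segment joining the vertices e₁ and e₂. -/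
open Finset Filter Topology

lemma sum_two_supp {m : ℕ} {i j : Fin m} (hij : i ≠ j) (f : Fin m → ℝ)
    (h : ∀ c, c ≠ i → c ≠ j → f c = 0) : ∑ c, f c = f i + f j :=
  Fintype.sum_eq_add i j hij (fun c hc => h c hc.1 hc.2)

lemma single_one_rest_zero {m : ℕ} (f : Fin m → ℝ) (hnn : ∀ k, 0 ≤ f k)
    (hsum : ∑ k, f k = 1) (k0 : Fin m) (h0 : f k0 = 1) {k : Fin m} (hk : k ≠ k0) :
    f k = 0 := by
  have h := Finset.add_sum_erase Finset.univ f (Finset.mem_univ k0)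
  have hz : ∑ x ∈ Finset.univ.erase k0, f x = 0 := by rw [h0] at h; linarith [hsum, h]
  exact (Finset.sum_eq_zero_iff_of_nonneg (fun i _ => hnn i)).1 hz k
    (Finset.mem_erase.2 ⟨hk, Finset.mem_univ k⟩)

def seg2 {m : ℕ} (i j : Fin m) (l : ℝ) : Fin m → ℝ :=
  fun a => if a = i then l else if a = j then 1 - l else 0

lemma seg2_apply_left {m : ℕ} (i j : Fin m) (l : ℝ) : seg2 i j l i = l := by simp [seg2]

lemma seg2_apply_right {m : ℕ} {i j : Fin m} (hij : i ≠ j) (l : ℝ) : seg2 i j l j = 1 - l := by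
  simp [seg2, hij.symm]

lemma seg2_apply_other {m : ℕ} {i j a : Fin m} (hi : a ≠ i) (hj : a ≠ j) (l : ℝ) :
    seg2 i j l a = 0 := by simp [seg2, hi, hj]

lemma seg2_mem {m : ℕ} {i j : Fin m} (hij : i ≠ j) {l : ℝ} (h0 : 0 ≤ l) (h1 : l ≤ 1) :
    seg2 i j l ∈ stdSimplex ℝ (Fin m) := by
  constructor
  · intro a
    by_cases hi : a = i
    · subst hi; rw [seg2_apply_left]; exact h0
    by_cases hj : a = j
    · subst hj; rw [seg2_apply_right hij]; linarith
    · rw [seg2_apply_other hi hj]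
  · rw [sum_two_supp hij _ (fun c hi hj => seg2_apply_other hi hj l),
      seg2_apply_left, seg2_apply_right hij]; ring

lemma qso_seg2 {m : ℕ} (p : Fin m → Fin m → Fin m → ℝ)
    (hsym : ∀ i j k, p i j k = p j i k) {i j : Fin m} (hij : i ≠ j) (l : ℝ) (k : Fin m) :
    QSO p (seg2 i j l) k
      = p i i k * (l * l) + 2 * p i j k * (l * (1 - l)) + p j j k * ((1 - l) * (1 - l)) := by
  unfold QSO
  rw [sum_two_supp hij _ (fun c hci hcj => by
    simp only [seg2_apply_other hci hcj]
    exact Finset.sum_eq_zero fun b _ => by ring)]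
  rw [sum_two_supp hij (fun b => p i b k * seg2 i j l i * seg2 i j l b)
    (fun c hci hcj => by rw [seg2_apply_other hci hcj]; ring)]
  rw [sum_two_supp hij (fun b => p j b k * seg2 i j l j * seg2 i j l b)
    (fun c hci hcj => by rw [seg2_apply_other hci hcj]; ring)]
  rw [seg2_apply_left, seg2_apply_right hij, hsym j i]
  ring

lemma qso_mem {m : ℕ} (p : Fin m → Fin m → Fin m → ℝ)
    (hnn : ∀ i j k, 0 ≤ p i j k) (hst : ∀ i j, ∑ k, p i j k = 1)
    {x : Fin m → ℝ} (hx : x ∈ stdSimplex ℝ (Fin m)) :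
    QSO p x ∈ stdSimplex ℝ (Fin m) := by
  constructor
  · intro k
    exact Finset.sum_nonneg fun i _ => Finset.sum_nonneg fun j _ =>
      mul_nonneg (mul_nonneg (hnn i j k) (hx.1 i)) (hx.1 j)
  · unfold QSO
    rw [Finset.sum_comm]
    have : ∀ i : Fin m, ∑ k, ∑ j, p i j k * x i * x j = x i * ∑ j, x j := by
      intro i
      rw [Finset.sum_comm]
      have : ∀ j : Fin m, ∑ k, p i j k * x i * x j = x i * x j := by
        intro j
        rw [← Finset.sum_mul, ← Finset.sum_mul, hst]; ring
      rw [Finset.sum_congr rfl fun j _ => this j, ← Finset.mul_sum]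
    rw [Finset.sum_congr rfl fun i _ => this i, ← Finset.sum_mul, hx.2]
    simp [hx.2]

lemma outside_zero {m : ℕ} {v : Fin m → ℝ} (hnn : ∀ k, 0 ≤ v k)
    (hsum : ∑ k, v k = 1) {B : Finset (Fin m)} (hB : 1 ≤ ∑ k ∈ B, v k) :
    ∀ c ∉ B, v c = 0 := by
  intro c hc
  have hsd := Finset.sum_sdiff (f := v) (Finset.subset_univ B)
  have hge : (0:ℝ) ≤ ∑ k ∈ Finset.univ \ B, v k := Finset.sum_nonneg fun k _ => hnn k
  have hz : ∑ k ∈ Finset.univ \ B, v k = 0 := by linarith [hsd, hB, hge, hsum]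
  exact (Finset.sum_eq_zero_iff_of_nonneg (fun k _ => hnn k)).1 hz c
    (Finset.mem_sdiff.2 ⟨Finset.mem_univ c, hc⟩)

section Steps
variable {m : ℕ} (p : Fin m → Fin m → Fin m → ℝ) (i0 i1 : Fin m)
  (hsym : ∀ i j k, p i j k = p j i k) (hnn : ∀ i j k, 0 ≤ p i j k)
  (hst : ∀ i j, ∑ k, p i j k = 1)
  (hd : ∀ x ∈ stdSimplex ℝ (Fin m), Majorizes (QSO p x) x)
  (h01 : i0 ≠ i1)
  (hd1 : ∀ i, i ≠ i1 → p i i i0 = 1) (hd2 : p i1 i1 i1 = 1)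

include hsym hnn hst hd h01 hd1 hd2

lemma stepA : ∀ j, j ≠ i1 → ∀ k, k ≠ i0 → k ≠ i1 → p i1 j k = 0 := by
  intro j hj k hki0 hki1
  have hij : i1 ≠ j := Ne.symm hj
  have hxmem := seg2_mem hij (by norm_num) (by norm_num : (1:ℝ)/2 ≤ 1)
  obtain ⟨B, hBcard, hBsum⟩ := hd (seg2 i1 j (1/2)) hxmem ({i1, j} : Finset (Fin m))
  rw [Finset.sum_pair hij, seg2_apply_left, seg2_apply_right hij] at hBsum
  norm_num at hBsum
  have hVmem := qso_mem p hnn hst hxmem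
  have hout := outside_zero hVmem.1 hVmem.2 hBsum
  have hVval := qso_seg2 p hsym hij (1/2)
  -- i0 ∈ B and i1 ∈ B
  have hi0B : i0 ∈ B := by
    by_contra hc
    have := hout i0 hc
    rw [hVval i0] at this
    have h1 := hd1 j hj
    nlinarith [hnn i1 i1 i0, hnn i1 j i0]
  have hi1B : i1 ∈ B := by
    by_contra hc
    have := hout i1 hc
    rw [hVval i1] at this
    nlinarith [hnn j j i1, hnn i1 j i1]
  have hBeq : B = {i0, i1} := by
    apply (Finset.eq_of_subset_of_card_le _ _).symm
    · intro a ha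
      rcases Finset.mem_insert.1 ha with h | h
      · subst h; exact hi0B
      · rw [Finset.mem_singleton.1 h]; exact hi1B
    · rw [hBcard, Finset.card_pair hij, Finset.card_pair h01]
  have hk : k ∉ B := by
    rw [hBeq]
    simp only [Finset.mem_insert, Finset.mem_singleton]
    push_neg
    exact ⟨hki0, hki1⟩
  have := hout k hk
  rw [hVval k] at this
  nlinarith [hnn i1 i1 k, hnn j j k, hnn i1 j k]

lemma stepB : ∀ i j, i ≠ i1 → j ≠ i1 → i ≠ j → 1/2 ≤ p i j i0 := by
  intro i j hi hj hij
  by_contra hlt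
  push_neg at hlt
  set q := p i j i0 with hq
  have hq0 : 0 ≤ q := hnn i j i0
  set l : ℝ := (1 - 2*q)/(4*(1-q)) with hldef
  have hden : (0:ℝ) < 4*(1-q) := by nlinarith
  have hl0 : 0 < l := by
    apply div_pos; nlinarith; exact hden
  have hlhalf : l < 1/2 := by
    rw [div_lt_iff₀ hden]; nlinarith
  have hleq : l * (4*(1-q)) = 1 - 2*q := div_mul_cancel₀ _ (ne_of_gt hden)
  have hxmem := seg2_mem hij (le_of_lt hl0) (by linarith)
  obtain ⟨B, hBcard, hBsum⟩ := hd (seg2 i j l) hxmem ({j} : Finset (Fin m))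
  rw [Finset.sum_singleton, seg2_apply_right hij] at hBsum
  rw [Finset.card_singleton] at hBcard
  obtain ⟨b, rfl⟩ := Finset.card_eq_one.1 hBcard
  rw [Finset.sum_singleton] at hBsum
  have hVval := qso_seg2 p hsym hij l
  rw [hVval b] at hBsum
  by_cases hb : b = i0
  · subst hb
    rw [hd1 i hi, hd1 j hj, ← hq] at hBsum
    nlinarith
  · rw [single_one_rest_zero (p i i) (hnn i i) (hst i i) i0 (hd1 i hi) hb,
      single_one_rest_zero (p j j) (hnn j j) (hst j j) i0 (hd1 j hj) hb] at hBsum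
    have hple : p i j b ≤ 1 := by
      calc p i j b ≤ ∑ k, p i j k :=
        Finset.single_le_sum (fun k _ => hnn i j k) (Finset.mem_univ b)
      _ = 1 := hst i j
    nlinarith [hnn i j b]

end Steps

section Steps2
variable {m : ℕ} (p : Fin m → Fin m → Fin m → ℝ) (i0 i1 : Fin m)
  (hsym : ∀ i j k, p i j k = p j i k) (hnn : ∀ i j k, 0 ≤ p i j k)
  (hst : ∀ i j, ∑ k, p i j k = 1)
  (hd : ∀ x ∈ stdSimplex ℝ (Fin m), Majorizes (QSO p x) x)
  (h01 : i0 ≠ i1)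
  (hd1 : ∀ i, i ≠ i1 → p i i i0 = 1) (hd2 : p i1 i1 i1 = 1)

include hsym hnn hst hd h01 hd1 hd2

set_option linter.unusedSectionVars false

lemma stepHalf : p i0 i1 i0 = 1/2 ∧ p i0 i1 i1 = 1/2 := by
  have hA := stepA p i0 i1 hsym hnn hst hd h01 hd1 hd2
  have h10 : i1 ≠ i0 := Ne.symm h01
  have hz : ∀ k, k ≠ i0 → k ≠ i1 → p i0 i1 k = 0 := fun k hk0 hk1 => by
    rw [hsym]; exact hA i0 h01 k hk0 hk1
  have hab : p i0 i1 i0 + p i0 i1 i1 = 1 := by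
    rw [← sum_two_supp h01 (p i0 i1) (fun c c0 c1 => hz c c0 c1)]
    exact hst i0 i1
  have h00 : p i0 i0 i0 = 1 := hd1 i0 h01
  have h001 : p i0 i0 i1 = 0 :=
    single_one_rest_zero (p i0 i0) (hnn i0 i0) (hst i0 i0) i0 h00 h10
  have h110 : p i1 i1 i0 = 0 :=
    single_one_rest_zero (p i1 i1) (hnn i1 i1) (hst i1 i1) i1 hd2 h01
  have hble : p i0 i1 i1 ≤ 1 := by
    calc p i0 i1 i1 ≤ ∑ k, p i0 i1 k :=
      Finset.single_le_sum (fun k _ => hnn i0 i1 k) (Finset.mem_univ i1)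
    _ = 1 := hst i0 i1
  have hale : p i0 i1 i0 ≤ 1 := by linarith [hnn i0 i1 i1]
  -- test at l, pick out coordinate
  have test : ∀ (l : ℝ), 0 < l → l < 1 → ∀ A : Finset (Fin m), A = {i0} ∨ A = {i1} →
      ∃ b : Fin m, ∑ t ∈ A, seg2 i0 i1 l t ≤ QSO p (seg2 i0 i1 l) b := by
    intro l hl0 hl1 A hA
    have hxmem := seg2_mem h01 (le_of_lt hl0) (le_of_lt hl1)
    obtain ⟨B, hBcard, hBsum⟩ := hd (seg2 i0 i1 l) hxmem A
    have hcard1 : B.card = 1 := by rcases hA with rfl | rfl <;> simpa using hBcard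
    obtain ⟨b, rfl⟩ := Finset.card_eq_one.1 hcard1
    rw [Finset.sum_singleton] at hBsum
    exact ⟨b, hBsum⟩
  have ha : 1/2 ≤ p i0 i1 i0 := by
    obtain ⟨b, hb⟩ := test (3/4) (by norm_num) (by norm_num) {i0} (Or.inl rfl)
    rw [Finset.sum_singleton, seg2_apply_left, qso_seg2 p hsym h01] at hb
    by_cases hbi0 : b = i0
    · subst hbi0; rw [h00, h110] at hb; nlinarith
    by_cases hbi1 : b = i1
    · subst hbi1; rw [h001, hd2] at hb; nlinarith
    · rw [hz b hbi0 hbi1,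
        single_one_rest_zero (p i0 i0) (hnn i0 i0) (hst i0 i0) i0 h00 hbi0,
        single_one_rest_zero (p i1 i1) (hnn i1 i1) (hst i1 i1) i1 hd2 hbi1] at hb
      norm_num at hb
  have hbge : 1/2 ≤ p i0 i1 i1 := by
    obtain ⟨b, hb⟩ := test (1/4) (by norm_num) (by norm_num) {i1} (Or.inr rfl)
    rw [Finset.sum_singleton, seg2_apply_right h01, qso_seg2 p hsym h01] at hb
    by_cases hbi0 : b = i0
    · subst hbi0; rw [h00, h110] at hb; nlinarith
    by_cases hbi1 : b = i1
    · subst hbi1; rw [h001, hd2] at hb; nlinarith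
    · rw [hz b hbi0 hbi1,
        single_one_rest_zero (p i0 i0) (hnn i0 i0) (hst i0 i0) i0 h00 hbi0,
        single_one_rest_zero (p i1 i1) (hnn i1 i1) (hst i1 i1) i1 hd2 hbi1] at hb
      norm_num at hb
  constructor <;> linarith

end Steps2

section Contr
variable {m : ℕ} (p : Fin m → Fin m → Fin m → ℝ) (i0 i1 : Fin m)
  (hnn : ∀ i j k, 0 ≤ p i j k) (hst : ∀ i j, ∑ k, p i j k = 1)
  (h01 : i0 ≠ i1)
  (hcdiag : ∀ i k, k ≠ i0 → k ≠ i1 → p i i k = 0)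
  (hc1 : ∀ i j k, (i = i1 ∨ j = i1) → k ≠ i0 → k ≠ i1 → p i j k = 0)
  (hBnd : ∀ i j, i ≠ i1 → j ≠ i1 → i ≠ j → 1/2 ≤ p i j i0)

include hnn hst h01 hcdiag hc1 hBnd

set_option linter.unusedSectionVars false

lemma contraction {z : Fin m → ℝ} (hz : z ∈ stdSimplex ℝ (Fin m)) :
    ∑ k ∈ (Finset.univ.erase i1).erase i0, QSO p z k ≤
      (∑ k ∈ (Finset.univ.erase i1).erase i0, z k)
        * (1 - (∑ k ∈ (Finset.univ.erase i1).erase i0, z k) / 2) := by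
  classical
  set S : Finset (Fin m) := Finset.univ.erase i1 with hS
  set K : Finset (Fin m) := S.erase i0 with hK
  have hi0S : i0 ∈ S := Finset.mem_erase.2 ⟨h01, Finset.mem_univ i0⟩
  have hKmem : ∀ k ∈ K, k ≠ i0 ∧ k ≠ i1 := fun k hk =>
    ⟨(Finset.mem_erase.1 hk).1, (Finset.mem_erase.1 (Finset.mem_erase.1 hk).2).1⟩
  set c : Fin m → Fin m → ℝ := fun i j => ∑ k ∈ K, p i j k with hc
  -- rewrite LHS
  have hswap : ∑ k ∈ K, QSO p z k = ∑ i, ∑ j, c i j * z i * z j := by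
    unfold QSO
    rw [Finset.sum_comm]
    refine Finset.sum_congr rfl fun i _ => ?_
    rw [Finset.sum_comm]
    refine Finset.sum_congr rfl fun j _ => ?_
    rw [hc]
    simp only []
    rw [Finset.sum_mul, Finset.sum_mul]
  rw [hswap]
  have hcnn : ∀ i j, 0 ≤ c i j := fun i j =>
    Finset.sum_nonneg fun k _ => hnn i j k
  have hcii : ∀ i, c i i = 0 := fun i =>
    Finset.sum_eq_zero fun k hk => hcdiag i k (hKmem k hk).1 (hKmem k hk).2
  have hc1' : ∀ i j, i = i1 ∨ j = i1 → c i j = 0 := fun i j h =>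
    Finset.sum_eq_zero fun k hk => hc1 i j k h (hKmem k hk).1 (hKmem k hk).2
  have hchalf : ∀ i j, i ≠ i1 → j ≠ i1 → i ≠ j → c i j ≤ 1/2 := by
    intro i j hi hj hij
    have h1 : p i j i1 + ∑ k ∈ S, p i j k = ∑ k, p i j k :=
      Finset.add_sum_erase _ _ (Finset.mem_univ i1)
    have h2 : p i j i0 + ∑ k ∈ K, p i j k = ∑ k ∈ S, p i j k :=
      Finset.add_sum_erase _ _ hi0S
    have := hBnd i j hi hj hij
    have := hnn i j i1
    rw [hst i j] at h1
    linarith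
  -- reduce to S × S
  have houter : ∑ i, ∑ j, c i j * z i * z j = ∑ i ∈ S, ∑ j ∈ S, c i j * z i * z j := by
    rw [← Finset.add_sum_erase _ _ (Finset.mem_univ i1), ← hS]
    rw [Finset.sum_eq_zero fun j _ => by rw [hc1' i1 j (Or.inl rfl)]; ring, zero_add]
    refine Finset.sum_congr rfl fun i _ => ?_
    rw [← Finset.add_sum_erase _ _ (Finset.mem_univ i1), ← hS]
    rw [hc1' i i1 (Or.inr rfl), zero_mul, zero_mul, zero_add]
  rw [houter]
  -- termwise bound
  have hzn : ∀ i, 0 ≤ z i := hz.1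
  have hbound : ∑ i ∈ S, ∑ j ∈ S, c i j * z i * z j ≤
      ∑ i ∈ S, ∑ j ∈ S, (if j = i then 0 else (1/2) * (z i * z j)) := by
    refine Finset.sum_le_sum fun i _ => Finset.sum_le_sum fun j hj => ?_
    by_cases hji : j = i
    · subst hji; rw [hcii j, if_pos rfl]; ring_nf; exact le_refl _
    · rw [if_neg hji, mul_assoc]
      exact mul_le_mul_of_nonneg_right
        (hchalf i j (Finset.mem_erase.1 ‹i ∈ S›).1 (Finset.mem_erase.1 hj).1 (Ne.symm hji))
        (mul_nonneg (hzn i) (hzn j))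
  refine le_trans hbound ?_
  have hwr : z i0 + ∑ k ∈ K, z k = ∑ j ∈ S, z j := Finset.add_sum_erase S z hi0S
  have hw1 : z i1 + ∑ j ∈ S, z j = 1 := by
    rw [hS, Finset.add_sum_erase _ _ (Finset.mem_univ i1)]; exact hz.2
  have hr0 : 0 ≤ ∑ k ∈ K, z k := Finset.sum_nonneg fun k _ => hzn k
  have hD : z i0 * z i0 ≤ ∑ i ∈ S, z i * z i :=
    Finset.single_le_sum (f := fun i => z i * z i) (fun i _ => mul_self_nonneg (z i)) hi0S
  have hsum : ∑ i ∈ S, ∑ j ∈ S, (if j = i then 0 else (1/2) * (z i * z j))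
      = (1/2) * ((∑ j ∈ S, z j) * (∑ j ∈ S, z j)) - (1/2) * ∑ i ∈ S, z i * z i := by
    have hrow : ∀ i ∈ S, ∑ j ∈ S, (if j = i then 0 else (1/2) * (z i * z j))
        = (1/2) * (z i * ∑ j ∈ S, z j) - (1/2) * (z i * z i) := by
      intro i hi
      have hterm : ∀ j ∈ S, (if j = i then 0 else (1/2) * (z i * z j))
          = (1/2) * (z i * z j) - (if j = i then (1/2) * (z i * z j) else 0) := by
        intro j _; split_ifs with h
        · subst h; ring
        · ring
      rw [Finset.sum_congr rfl hterm, Finset.sum_sub_distrib,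
        Finset.sum_ite_eq' S i (fun j => (1/2) * (z i * z j)), if_pos hi]
      congr 1
      have e0 : ∑ j ∈ S, (1/2) * (z i * z j) = ∑ j ∈ S, (1/2 * z i) * z j :=
        Finset.sum_congr rfl fun j _ => by ring
      rw [e0, ← Finset.mul_sum]
      ring
    rw [Finset.sum_congr rfl hrow, Finset.sum_sub_distrib]
    have e1 : ∑ i ∈ S, (1/2) * (z i * (∑ j ∈ S, z j)) = ∑ i ∈ S, z i * ((∑ j ∈ S, z j)/2) :=
      Finset.sum_congr rfl fun i _ => by ring
    have e2 : ∑ i ∈ S, (1/2) * (z i * z i) = (1/2) * ∑ i ∈ S, z i * z i := by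
      rw [Finset.mul_sum]
    rw [e1, e2, ← Finset.sum_mul]
    ring
  rw [hsum]
  nlinarith [hzn i0, hzn i1, hD, hr0, hwr, hw1,
    mul_nonneg hr0 (by linarith [hzn i1, hwr, hw1] : (0:ℝ) ≤ 1 - z i0 - ∑ k ∈ K, z k)]

end Contr

/-- if `p_{ii,1} = 1` for all `i ≠ 2` and `p_{22,2} = 1`, the dissipative
q.s.o. has infinitely many fixed points and every ω-limit set is contained in the
segment joining `e₁` and `e₂`.  (Indices 0-based: `1 ↦ 0`, `2 ↦ 1`.) -/
theorem stmt5 {m : ℕ} (hm : 1 < m) (p : Fin m → Fin m → Fin m → ℝ)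
    (hp : IsQSOCoeff p) (hd : IsDissipative p)
    (h1 : ∀ i : Fin m, i ≠ ⟨1, hm⟩ → p i i ⟨0, by omega⟩ = 1)
    (h2 : p ⟨1, hm⟩ ⟨1, hm⟩ ⟨1, hm⟩ = 1) :
    {x ∈ stdSimplex ℝ (Fin m) | QSO p x = x}.Infinite ∧
    ∀ x ∈ stdSimplex ℝ (Fin m),
      omegaLimitSet (QSO p) x ⊆
        segment ℝ (vertex (⟨0, by omega⟩ : Fin m)) (vertex (⟨1, hm⟩ : Fin m)) := by
  classical
  obtain ⟨hsym, hnn, hst⟩ := hp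
  have hm0 : 0 < m := by omega
  set i0 : Fin m := ⟨0, hm0⟩ with hi0def
  set i1 : Fin m := ⟨1, hm⟩ with hi1def
  have h01 : i0 ≠ i1 := by
    intro h
    have := congrArg Fin.val h
    simp [hi0def, hi1def] at this
  have hd1 : ∀ i, i ≠ i1 → p i i i0 = 1 := h1
  have hd2 : p i1 i1 i1 = 1 := h2
  obtain ⟨ha, hb⟩ := stepHalf p i0 i1 hsym hnn hst hd h01 hd1 hd2
  have hA := stepA p i0 i1 hsym hnn hst hd h01 hd1 hd2
  have hC1 : ∀ i, i ≠ i1 → ∀ k, k ≠ i0 → p i i k = 0 := fun i hi k hk =>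
    single_one_rest_zero (p i i) (hnn i i) (hst i i) i0 (hd1 i hi) hk
  have hC2 : ∀ k, k ≠ i1 → p i1 i1 k = 0 := fun k hk =>
    single_one_rest_zero (p i1 i1) (hnn i1 i1) (hst i1 i1) i1 hd2 hk
  have hfix : ∀ l : ℝ, QSO p (seg2 i0 i1 l) = seg2 i0 i1 l := by
    intro l
    funext k
    rw [qso_seg2 p hsym h01]
    by_cases hk0 : k = i0
    · subst hk0
      rw [hd1 i0 h01, ha, hC2 i0 h01, seg2_apply_left]
      ring
    by_cases hk1 : k = i1
    · subst hk1
      rw [hC1 i0 h01 i1 (Ne.symm h01), hb, hd2, seg2_apply_right h01]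
      ring
    · have hz : p i0 i1 k = 0 := by rw [hsym]; exact hA i0 h01 k hk0 hk1
      rw [hC1 i0 h01 k hk0, hC2 k hk1, hz, seg2_apply_other hk0 hk1]
      ring
  constructor
  · apply Set.infinite_of_injective_forall_mem
      (f := fun n : ℕ => seg2 i0 i1 (1/(n+2)))
    · intro a b hab
      have h := congrFun hab i0
      simp only [seg2_apply_left] at h
      have ha2 : ((a:ℝ)+2) ≠ 0 := by positivity
      have hb2 : ((b:ℝ)+2) ≠ 0 := by positivity
      field_simp at h
      exact_mod_cast (by linarith : (a:ℝ) = b)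
    · intro n
      have hpos : (0:ℝ) < (n:ℝ) + 2 := by positivity
      have h0 : (0:ℝ) ≤ 1/((n:ℝ)+2) := by positivity
      have h1' : (1:ℝ)/((n:ℝ)+2) ≤ 1 := by
        rw [div_le_one hpos]
        have : (0:ℝ) ≤ (n:ℝ) := Nat.cast_nonneg n
        linarith
      exact ⟨seg2_mem h01 h0 h1', hfix _⟩
  · intro x hx y hy
    obtain ⟨φ, hφ, hlim⟩ := hy
    set K : Finset (Fin m) := (Finset.univ.erase i1).erase i0 with hK
    have hc1 : ∀ i j k, (i = i1 ∨ j = i1) → k ≠ i0 → k ≠ i1 → p i j k = 0 := by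
      intro i j k hij hk0 hk1
      rcases hij with rfl | rfl
      · by_cases hj : j = i1
        · subst hj; exact hC2 k hk1
        · exact hA j hj k hk0 hk1
      · by_cases hi : i = i1
        · subst hi; exact hC2 k hk1
        · rw [hsym]; exact hA i hi k hk0 hk1
    have hcdiag : ∀ i k, k ≠ i0 → k ≠ i1 → p i i k = 0 := by
      intro i k hk0 hk1
      by_cases hi : i = i1
      · subst hi; exact hC2 k hk1
      · exact hC1 i hi k hk0
    have hBnd := stepB p i0 i1 hsym hnn hst hd h01 hd1 hd2
    have hmem : ∀ n, (QSO p)^[n] x ∈ stdSimplex ℝ (Fin m) := by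
      intro n
      induction n with
      | zero => exact hx
      | succ n ih => rw [Function.iterate_succ_apply']; exact qso_mem p hnn hst ih
    set r : ℕ → ℝ := fun n => ∑ k ∈ K, (QSO p)^[n] x k with hrdef
    have hstep : ∀ n, r (n+1) ≤ r n * (1 - r n / 2) := by
      intro n
      have h' := contraction p i0 i1 hnn hst h01 hcdiag hc1 hBnd (hmem n)
      show ∑ k ∈ K, (QSO p)^[n+1] x k ≤ _
      simp only [Function.iterate_succ_apply']
      exact h'
    have hr0 : ∀ n, 0 ≤ r n := fun n => Finset.sum_nonneg fun k _ => (hmem n).1 k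
    have hanti : Antitone r := antitone_nat_of_succ_le fun n =>
      le_trans (hstep n) (by nlinarith [hr0 n])
    have hbdd : BddBelow (Set.range r) := ⟨0, fun v ⟨n, hn⟩ => hn ▸ hr0 n⟩
    have hlimr : Tendsto r atTop (𝓝 (⨅ n, r n)) := tendsto_atTop_ciInf hanti hbdd
    set L := ⨅ n, r n with hL
    have hL0 : 0 ≤ L := le_ciInf fun n => hr0 n
    have hLle : L ≤ L * (1 - L / 2) := by
      have h1' : Tendsto (fun n => r (n+1)) atTop (𝓝 L) :=
        hlimr.comp (tendsto_add_atTop_nat 1)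
      have h2' : Tendsto (fun n => r n * (1 - r n / 2)) atTop (𝓝 (L * (1 - L/2))) :=
        hlimr.mul (tendsto_const_nhds.sub (hlimr.div_const 2))
      exact le_of_tendsto_of_tendsto' h1' h2' hstep
    have hLz : L = 0 := by nlinarith
    rw [hLz] at hlimr
    have hyk : ∀ k ∈ K, y k = 0 := by
      intro k hk
      have hky : Tendsto (fun n => (QSO p)^[φ n] x k) atTop (𝓝 (y k)) :=
        hlim.apply_nhds k
      have hsq : Tendsto (fun n => (QSO p)^[φ n] x k) atTop (𝓝 0) := by
        refine tendsto_of_tendsto_of_tendsto_of_le_of_le tendsto_const_nhds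
          (hlimr.comp hφ.tendsto_atTop) (fun n => (hmem (φ n)).1 k) (fun n => ?_)
        exact Finset.single_le_sum (fun k _ => (hmem (φ n)).1 k) hk
      exact tendsto_nhds_unique hky hsq
    have hymem : y ∈ stdSimplex ℝ (Fin m) :=
      (isClosed_stdSimplex ℝ (Fin m)).mem_of_tendsto hlim
        (Filter.Eventually.of_forall fun n => hmem (φ n))
    have hsum01 : y i0 + y i1 = 1 := by
      have h1' : y i1 + ∑ k ∈ Finset.univ.erase i1, y k = 1 := by
        rw [Finset.add_sum_erase _ _ (Finset.mem_univ i1)]; exact hymem.2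
      have h2' : y i0 + ∑ k ∈ K, y k = ∑ k ∈ Finset.univ.erase i1, y k :=
        Finset.add_sum_erase _ _ (Finset.mem_erase.2 ⟨h01, Finset.mem_univ i0⟩)
      have h3' : ∑ k ∈ K, y k = 0 := Finset.sum_eq_zero hyk
      linarith
    refine ⟨y i0, y i1, hymem.1 i0, hymem.1 i1, hsum01, ?_⟩
    funext a
    simp only [Pi.add_apply, Pi.smul_apply, smul_eq_mul, vertex]
    by_cases ha0 : a = i0
    · subst ha0
      rw [if_pos rfl, if_neg h01]
      ring
    by_cases ha1 : a = i1
    · subst ha1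
      rw [if_pos rfl, if_neg (Ne.symm h01)]
      ring
    · rw [if_neg ha0, if_neg ha1,
        hyk a (Finset.mem_erase.2 ⟨ha0, Finset.mem_erase.2 ⟨ha1, Finset.mem_univ a⟩⟩)]
      ring
end

section
/- Every dissipative quadratic stochastic operator V on S^{m-1} has at least one fixed point, and its set of fixed points Fix(V) is either a singleton or an infinite set (in particular, V cannot have exactly two, or any finite number greater than one, of fixed points). -/
open Finset Filter Topology

section A
variable {m : ℕ} {p : Fin m → Fin m → Fin m → ℝ} {σ : Fin m → Fin m}

private lemma sum_vertex (k : Fin m) : ∑ j, vertex k j = 1 := by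
  simp [vertex]

private lemma vertex_mem (k : Fin m) : vertex k ∈ stdSimplex ℝ (Fin m) := by
  constructor
  · intro j; unfold vertex; split <;> norm_num
  · exact sum_vertex k

private lemma mix_mem (i j : Fin m) (a b : ℝ) (ha : 0 ≤ a) (hb : 0 ≤ b) (hab : a + b = 1) :
    (fun t => a * vertex i t + b * vertex j t) ∈ stdSimplex ℝ (Fin m) := by
  constructor
  · intro t
    have h1 : (0:ℝ) ≤ vertex i t := (vertex_mem i).1 t
    have h2 : (0:ℝ) ≤ vertex j t := (vertex_mem j).1 t
    positivity
  · rw [Finset.sum_add_distrib, ← Finset.mul_sum, ← Finset.mul_sum, sum_vertex, sum_vertex]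
    linarith

private lemma qso_mix (hsym : ∀ i j k, p i j k = p j i k) (i j k : Fin m) (a b : ℝ)
    (x : Fin m → ℝ)
    (hx : ∀ t, x t = (a * if t = i then 1 else 0) + (b * if t = j then 1 else 0)) :
    QSO p x k = a^2 * p i i k + 2*(a*b) * p i j k + b^2 * p j j k := by
  unfold QSO
  have step1 : ∀ s : Fin m, ∑ t, p s t k * x s * x t = x s * (a * p s i k + b * p s j k) := by
    intro s
    have h1 : ∑ t, p s t k * x s * x t = x s * ∑ t, p s t k * x t := by
      rw [Finset.mul_sum]; exact Finset.sum_congr rfl fun t _ => by ring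
    rw [h1]
    congr 1
    have h2 : ∀ t, p s t k * x t
        = (if t = i then a * p s t k else 0) + (if t = j then b * p s t k else 0) := by
      intro t; rw [hx t]; split <;> split <;> ring
    rw [Finset.sum_congr rfl fun t _ => h2 t, Finset.sum_add_distrib,
        Finset.sum_ite_eq' Finset.univ i (fun t => a * p s t k),
        Finset.sum_ite_eq' Finset.univ j (fun t => b * p s t k)]
    simp
  rw [Finset.sum_congr rfl fun s _ => step1 s]
  have h3 : ∀ s : Fin m, x s * (a * p s i k + b * p s j k)
      = (if s = i then a * (a * p s i k + b * p s j k) else 0)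
        + (if s = j then b * (a * p s i k + b * p s j k) else 0) := by
    intro s; rw [hx s]; split <;> split <;> ring
  rw [Finset.sum_congr rfl fun s _ => h3 s, Finset.sum_add_distrib,
      Finset.sum_ite_eq' Finset.univ i _, Finset.sum_ite_eq' Finset.univ j _]
  simp only [Finset.mem_univ, if_true]
  rw [hsym j i k]
  ring

private lemma ite_swap (c d : Fin m) (v : ℝ) :
    (if c = d then v else 0) = (if d = c then v else 0) := by
  by_cases h : c = d
  · simp [h]
  · simp [h, Ne.symm h]

private lemma qso_supported
    (hdel : ∀ i k, p i i k = if k = σ i then (1:ℝ) else 0)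
    (D : Finset (Fin m))
    (hhD : ∀ i ∈ D, ∀ j ∈ D, i ≠ j → ∀ k, p i j k
      = (if k = σ i then (1:ℝ)/2 else 0) + (if k = σ j then (1:ℝ)/2 else 0))
    (z : Fin m → ℝ) (hzs : ∑ i, z i = 1) (hzsupp : ∀ i, i ∉ D → z i = 0) (k : Fin m) :
    QSO p z k = ∑ i, if σ i = k then z i else 0 := by
  unfold QSO
  have hpt : ∀ i j, p i j k * z i * z j
      = ((if σ i = k then (1:ℝ)/2 else 0) * z i) * z j
        + z i * ((if σ j = k then (1:ℝ)/2 else 0) * z j) := by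
    intro i j
    by_cases hzi : z i = 0
    · rw [hzi]; ring
    by_cases hzj : z j = 0
    · rw [hzj]; ring
    have hiD : i ∈ D := by by_contra h; exact hzi (hzsupp i h)
    have hjD : j ∈ D := by by_contra h; exact hzj (hzsupp j h)
    have hpf : p i j k = (if σ i = k then (1:ℝ)/2 else 0) + (if σ j = k then (1:ℝ)/2 else 0) := by
      by_cases hij : i = j
      · subst hij
        rw [hdel i k, ite_swap k (σ i) 1]
        split <;> norm_num
      · rw [hhD i hiD j hjD hij k, ite_swap k (σ i) _, ite_swap k (σ j) _]
    rw [hpf]; ring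
  rw [Finset.sum_congr rfl fun i _ => Finset.sum_congr rfl fun j _ => hpt i j]
  have hsplit : ∑ i, ∑ j, (((if σ i = k then (1:ℝ)/2 else 0) * z i) * z j
      + z i * ((if σ j = k then (1:ℝ)/2 else 0) * z j))
      = (∑ i, (if σ i = k then (1:ℝ)/2 else 0) * z i) * (∑ j, z j)
        + (∑ i, z i) * (∑ j, (if σ j = k then (1:ℝ)/2 else 0) * z j) := by
    rw [Finset.sum_mul, Finset.sum_mul, ← Finset.sum_add_distrib]
    refine Finset.sum_congr rfl fun i _ => ?_
    rw [Finset.sum_add_distrib, ← Finset.mul_sum, ← Finset.mul_sum]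
  rw [hsplit, hzs, mul_one, one_mul, ← Finset.sum_add_distrib]
  refine Finset.sum_congr rfl fun i _ => ?_
  split <;> ring

private lemma fix_of_const
    (hdel : ∀ i k, p i i k = if k = σ i then (1:ℝ) else 0)
    (D : Finset (Fin m))
    (hhD : ∀ i ∈ D, ∀ j ∈ D, i ≠ j → ∀ k, p i j k
      = (if k = σ i then (1:ℝ)/2 else 0) + (if k = σ j then (1:ℝ)/2 else 0))
    (hD2 : ∀ i ∈ D, ∀ j ∈ D, σ i = σ j → i = j)
    (hD3 : ∀ i ∈ D, ∃ j, j ∈ D ∧ σ j = i)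
    (z : Fin m → ℝ) (hzs : ∑ i, z i = 1) (hzsupp : ∀ i, i ∉ D → z i = 0)
    (hzconst : ∀ i ∈ D, z (σ i) = z i) :
    QSO p z = z := by
  funext k
  rw [qso_supported hdel D hhD z hzs hzsupp k]
  by_cases hk : ∃ i, i ∈ D ∧ σ i = k
  · obtain ⟨i₀, hiD, hik⟩ := hk
    rw [Finset.sum_eq_single i₀]
    · rw [if_pos hik, ← hzconst i₀ hiD, hik]
    · intro b _ hb
      by_cases hbk : σ b = k
      · rw [if_pos hbk]
        apply hzsupp
        intro hbD
        exact hb (hD2 b hbD i₀ hiD (hbk.trans hik.symm))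
      · rw [if_neg hbk]
    · intro h; exact absurd (Finset.mem_univ i₀) h
  · push_neg at hk
    rw [Finset.sum_eq_zero, eq_comm]
    · apply hzsupp
      intro hkD
      obtain ⟨j, hjD, hjk⟩ := hD3 k hkD
      exact (hk j hjD) hjk
    · intro i _
      by_cases hik : σ i = k
      · rw [if_pos hik]
        apply hzsupp
        intro hiD
        exact hk i hiD hik
      · rw [if_neg hik]

private lemma exists_periodic (σ : Fin m → Fin m) (z : Fin m) :
    ∃ n a : ℕ, 0 < a ∧ σ^[a] (σ^[n] z) = σ^[n] z := by
  obtain ⟨x, y, hxy, heq⟩ := Finite.exists_ne_map_eq_of_infinite (fun n : ℕ => σ^[n] z)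
  rcases lt_trichotomy x y with h | h | h
  · refine ⟨x, y - x, Nat.sub_pos_of_lt h, ?_⟩
    rw [← Function.iterate_add_apply, Nat.sub_add_cancel h.le]
    exact heq.symm
  · exact absurd h hxy
  · refine ⟨y, x - y, Nat.sub_pos_of_lt h, ?_⟩
    rw [← Function.iterate_add_apply, Nat.sub_add_cancel h.le]
    exact heq

private lemma cycle_pack (σ : Fin m → Fin m) (k : Fin m) (L : ℕ) (hL : 0 < L)
    (hper : σ^[L] k = k) :
    (∀ n : ℕ, σ^[n] k ∈ (Finset.range L).image (fun n => σ^[n] k)) ∧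
    (∀ i ∈ (Finset.range L).image (fun n => σ^[n] k), ∀ n : ℕ,
        σ^[n] i ∈ (Finset.range L).image (fun n => σ^[n] k)) ∧
    (∀ i ∈ (Finset.range L).image (fun n => σ^[n] k),
      ∀ j ∈ (Finset.range L).image (fun n => σ^[n] k), σ i = σ j → i = j) ∧
    (∀ i ∈ (Finset.range L).image (fun n => σ^[n] k),
      ∃ j, j ∈ (Finset.range L).image (fun n => σ^[n] k) ∧ σ j = i) := by
  have hiter : ∀ n, σ^[n] k = σ^[n % L] k := by
    intro n
    induction n using Nat.strong_induction_on with
    | _ n ih =>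
      by_cases h : n < L
      · rw [Nat.mod_eq_of_lt h]
      · push_neg at h
        have h1 : σ^[n] k = σ^[n - L] k := by
          conv_lhs => rw [show n = (n - L) + L from (Nat.sub_add_cancel h).symm]
          rw [Function.iterate_add_apply, hper]
        rw [h1, ih (n - L) (by omega), Nat.mod_eq_sub_mod h]
  have hmem : ∀ n : ℕ, σ^[n] k ∈ (Finset.range L).image (fun n => σ^[n] k) := by
    intro n
    rw [hiter n]
    exact Finset.mem_image_of_mem _ (Finset.mem_range.mpr (Nat.mod_lt n hL))
  have hitermem : ∀ i ∈ (Finset.range L).image (fun n => σ^[n] k), ∀ n : ℕ,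
      σ^[n] i ∈ (Finset.range L).image (fun n => σ^[n] k) := by
    intro i hi n
    obtain ⟨n₀, _, rfl⟩ := Finset.mem_image.mp hi
    rw [← Function.iterate_add_apply]
    exact hmem _
  have hperC : ∀ i ∈ (Finset.range L).image (fun n => σ^[n] k), σ^[L] i = i := by
    intro i hi
    obtain ⟨n₀, _, rfl⟩ := Finset.mem_image.mp hi
    rw [← Function.iterate_add_apply, Nat.add_comm, Function.iterate_add_apply, hper]
  have e : L - 1 + 1 = L := Nat.succ_pred_eq_of_pos hL
  refine ⟨hmem, hitermem, ?_, ?_⟩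
  · intro i hi j hj hss
    calc i = σ^[L] i := (hperC i hi).symm
    _ = σ^[L-1+1] i := by rw [e]
    _ = σ^[L-1] (σ i) := Function.iterate_succ_apply σ (L-1) i
    _ = σ^[L-1] (σ j) := by rw [hss]
    _ = σ^[L-1+1] j := (Function.iterate_succ_apply σ (L-1) j).symm
    _ = σ^[L] j := by rw [e]
    _ = j := hperC j hj
  · intro i hi
    refine ⟨σ^[L-1] i, hitermem i hi (L-1), ?_⟩
    calc σ (σ^[L-1] i) = σ^[L-1+1] i := (Function.iterate_succ_apply' σ (L-1) i).symm
    _ = i := by rw [e, hperC i hi]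

end A


private lemma bary_sum {m : ℕ} (E : Finset (Fin m)) (hE : E.Nonempty) :
    ∑ j, (if j ∈ E then ((E.card : ℝ))⁻¹ else 0) = 1 := by
  rw [Finset.sum_ite_mem, Finset.univ_inter, Finset.sum_const, nsmul_eq_mul,
      mul_inv_cancel₀]
  exact_mod_cast (Finset.card_pos.mpr hE).ne'

set_option maxHeartbeats 1000000 in
/-- a dissipative q.s.o. has at least one fixed point, and its fixed point
set is either a singleton or infinite. -/
theorem stmt6 {m : ℕ} (hm : 0 < m) (p : Fin m → Fin m → Fin m → ℝ)
    (hp : IsQSOCoeff p) (hd : IsDissipative p) :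
    {x ∈ stdSimplex ℝ (Fin m) | QSO p x = x}.Nonempty ∧
    ((∃ a : Fin m → ℝ, {x ∈ stdSimplex ℝ (Fin m) | QSO p x = x} = {a}) ∨
      {x ∈ stdSimplex ℝ (Fin m) | QSO p x = x}.Infinite) := by
  obtain ⟨hsym, hnn, hsum⟩ := hp
  have hple : ∀ i j k, p i j k ≤ 1 := by
    intro i j k
    have h1 : p i j k ≤ ∑ k', p i j k' :=
      Finset.single_le_sum (fun k' _ => hnn i j k') (Finset.mem_univ k)
    rw [hsum i j] at h1
    exact h1
  -- existence of the vertex map σ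
  have hσex : ∀ i, ∃ s : Fin m, ∀ k, p i i k = if k = s then (1:ℝ) else 0 := by
    intro i
    obtain ⟨B, hBc, hBle⟩ := hd (vertex i) (vertex_mem i) {i}
    rw [Finset.card_singleton] at hBc
    obtain ⟨s, rfl⟩ := Finset.card_eq_one.mp hBc
    rw [Finset.sum_singleton, Finset.sum_singleton] at hBle
    have hv : vertex (m := m) i i = 1 := by simp [vertex]
    have hx : ∀ t, vertex (m := m) i t
        = ((1:ℝ) * if t = i then 1 else 0) + ((0:ℝ) * if t = i then 1 else 0) := by
      intro t; simp [vertex]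
    rw [qso_mix hsym i i s 1 0 (vertex i) hx, hv] at hBle
    have h1 : p i i s = 1 := by
      have h2 := hple i i s
      nlinarith [hnn i i s]
    refine ⟨s, fun k => ?_⟩
    by_cases hk : k = s
    · rw [if_pos hk, hk, h1]
    · rw [if_neg hk]
      have hsplit : p i i s + ∑ k' ∈ Finset.univ.erase s, p i i k' = 1 := by
        rw [Finset.add_sum_erase Finset.univ (fun k' => p i i k') (Finset.mem_univ s), hsum i i]
      have hz : ∑ k' ∈ Finset.univ.erase s, p i i k' = 0 := by
        rw [h1] at hsplit; linarith
      have hle : p i i k ≤ 0 := by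
        rw [← hz]
        exact Finset.single_le_sum (fun k' _ => hnn i i k')
          (Finset.mem_erase.mpr ⟨hk, Finset.mem_univ k⟩)
      exact le_antisymm hle (hnn i i k)
  choose σ hdel using hσex
  -- half coefficients when images differ
  have hhalf_ge : ∀ i j, i ≠ j → σ i ≠ σ j → (1:ℝ)/2 ≤ p i j (σ i) := by
    intro i j hij hs
    set x : Fin m → ℝ := fun s => (3/4 : ℝ) * vertex i s + (1/4 : ℝ) * vertex j s with hxd
    have hx : ∀ s, x s = ((3/4:ℝ) * if s = i then 1 else 0) + ((1/4:ℝ) * if s = j then 1 else 0) := by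
      intro s; rw [hxd]; simp [vertex]
    obtain ⟨B, hBc, hBle⟩ := hd x
      (by rw [hxd]; exact mix_mem i j (3/4) (1/4) (by norm_num) (by norm_num) (by norm_num)) {i}
    rw [Finset.card_singleton] at hBc
    obtain ⟨c, rfl⟩ := Finset.card_eq_one.mp hBc
    rw [Finset.sum_singleton, Finset.sum_singleton,
        qso_mix hsym i j c (3/4) (1/4) x hx] at hBle
    have hxi : x i = 3/4 := by rw [hxd]; simp [vertex, hij]
    rw [hxi, hdel i c, hdel j c] at hBle
    by_cases hc : c = σ i
    · have hc2 : ¬ (c = σ j) := by rw [hc]; exact hs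
      rw [if_pos hc, if_neg hc2] at hBle
      rw [← hc]
      linarith
    · rw [if_neg hc] at hBle
      have h2 := hple i j c
      have h3 := hnn i j c
      by_cases hc2 : c = σ j
      · rw [if_pos hc2] at hBle; exfalso; nlinarith
      · rw [if_neg hc2] at hBle; exfalso; nlinarith
  -- collision coefficients at least one half
  have hcol_ge : ∀ i j, i ≠ j → σ i = σ j → (1:ℝ)/2 ≤ p i j (σ i) := by
    intro i j hij hs
    by_contra hlt
    push_neg at hlt
    have hα0 : 0 ≤ p i j (σ i) := hnn i j (σ i)
    set α := p i j (σ i) with hαd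
    have h2α : (0:ℝ) < 2*(1-α) := by linarith
    have hne2 : (2*(1-α)) ≠ 0 := ne_of_gt h2α
    set t : ℝ := (1 + 1/(2*(1-α)))/2 with htd
    have hfrac0 : 0 < 1/(2*(1-α)) := by positivity
    have hfrac1 : 1/(2*(1-α)) < 1 := by rw [div_lt_one h2α]; linarith
    have ht1 : t < 1 := by rw [htd]; linarith
    have ht2 : 1/2 < t := by rw [htd]; linarith
    have hkey : 1 < 2*(1-α)*t := by
      have hexp : 2*(1-α)*t = (1-α) + 1/2 := by
        rw [htd, mul_div_assoc', mul_add, mul_one_div_cancel hne2]; ring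
      rw [hexp]; linarith
    set x : Fin m → ℝ := fun s => t * vertex i s + (1-t) * vertex j s with hxd
    have hx : ∀ s, x s = (t * if s = i then 1 else 0) + ((1-t) * if s = j then 1 else 0) := by
      intro s; rw [hxd]; simp [vertex]
    obtain ⟨B, hBc, hBle⟩ := hd x
      (by rw [hxd]; exact mix_mem i j t (1-t) (by linarith) (by linarith) (by ring)) {i}
    rw [Finset.card_singleton] at hBc
    obtain ⟨c, rfl⟩ := Finset.card_eq_one.mp hBc
    rw [Finset.sum_singleton, Finset.sum_singleton,
        qso_mix hsym i j c t (1-t) x hx] at hBle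
    have hxi : x i = t := by rw [hxd]; simp [vertex, hij]
    rw [hxi, hdel i c, hdel j c, ← hs] at hBle
    by_cases hc : c = σ i
    · rw [if_pos hc, hc, ← hαd] at hBle
      nlinarith [mul_pos (by linarith : (0:ℝ) < 1 - t) (by linarith : (0:ℝ) < 2*(1-α)*t - 1)]
    · rw [if_neg hc] at hBle
      have h2 := hple i j c
      have h3 := hnn i j c
      have htt : 0 < t*(1-t) := mul_pos (by linarith) (by linarith)
      have e1 : 2*(t*(1-t))*(p i j c) ≤ 2*(t*(1-t)) := by
        nlinarith [mul_nonneg htt.le (sub_nonneg.mpr h2)]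
      have e2 : 2*(t*(1-t)) < t := by
        nlinarith [mul_pos (by linarith : (0:ℝ) < t) (by linarith : (0:ℝ) < 2*t-1)]
      linarith
  -- full structure of cross coefficients when images differ
  have hhalf : ∀ i j, i ≠ j → σ i ≠ σ j → ∀ k, p i j k
      = (if k = σ i then (1:ℝ)/2 else 0) + (if k = σ j then (1:ℝ)/2 else 0) := by
    intro i j hij hs
    have h1 : (1:ℝ)/2 ≤ p i j (σ i) := hhalf_ge i j hij hs
    have h2 : (1:ℝ)/2 ≤ p i j (σ j) := by
      rw [hsym i j (σ j)]
      exact hhalf_ge j i (Ne.symm hij) (Ne.symm hs)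
    have hpairle : p i j (σ i) + p i j (σ j) ≤ 1 := by
      have hsub := Finset.sum_le_sum_of_subset_of_nonneg
        (Finset.subset_univ ({σ i, σ j} : Finset (Fin m))) (fun k _ _ => hnn i j k)
      rw [Finset.sum_pair hs, hsum i j] at hsub
      exact hsub
    have e1 : p i j (σ i) = 1/2 := by linarith
    have e2 : p i j (σ j) = 1/2 := by linarith
    have hrest : ∑ k ∈ Finset.univ \ ({σ i, σ j} : Finset (Fin m)), p i j k = 0 := by
      have hsd := Finset.sum_sdiff (f := fun k => p i j k)
        (Finset.subset_univ ({σ i, σ j} : Finset (Fin m)))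
      rw [Finset.sum_pair hs, hsum i j, e1, e2] at hsd
      linarith
    intro k
    by_cases hk1 : k = σ i
    · rw [hk1, if_pos rfl, if_neg hs, e1]; norm_num
    · by_cases hk2 : k = σ j
      · rw [hk2, if_neg (Ne.symm hs), if_pos rfl, e2]; norm_num
      · rw [if_neg hk1, if_neg hk2]
        have hmem : k ∈ Finset.univ \ ({σ i, σ j} : Finset (Fin m)) := by
          rw [Finset.mem_sdiff]
          exact ⟨Finset.mem_univ k, by simp [hk1, hk2]⟩
        have hle := Finset.single_le_sum (f := fun k => p i j k)
          (fun k' _ => hnn i j k') hmem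
        rw [hrest] at hle
        have h0 : p i j k = 0 := le_antisymm hle (hnn i j k)
        rw [h0]; norm_num
  -- a periodic point and its cycle
  obtain ⟨n₀, L₀, hL₀, hper₀⟩ := exists_periodic σ (⟨0, hm⟩ : Fin m)
  set k₀ := σ^[n₀] (⟨0, hm⟩ : Fin m) with hk₀def
  obtain ⟨hmemC, hiterC, hinjC, hsurjC⟩ := cycle_pack σ k₀ L₀ hL₀ hper₀
  set C := (Finset.range L₀).image (fun n => σ^[n] k₀) with hCdef
  have hk₀C : k₀ ∈ C := by
    have := hmemC 0
    simpa using this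
  have hmapC : ∀ i ∈ C, σ i ∈ C := by
    intro i hi
    have := hiterC i hi 1
    simpa using this
  have hNne : (C.card : ℝ) ≠ 0 := by
    have : 0 < C.card := Finset.card_pos.mpr ⟨k₀, hk₀C⟩
    exact_mod_cast this.ne'
  set w : Fin m → ℝ := fun j => if j ∈ C then ((C.card : ℝ))⁻¹ else 0 with hwdef
  have hw0 : ∀ j, 0 ≤ w j := by
    intro j; simp only [hwdef]
    split
    · exact inv_nonneg.mpr (Nat.cast_nonneg _)
    · exact le_rfl
  have hwsum : ∑ j, w j = 1 := by
    simp only [hwdef]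
    exact bary_sum C ⟨k₀, hk₀C⟩
  have hwΔ : w ∈ stdSimplex ℝ (Fin m) := ⟨hw0, hwsum⟩
  have hhDC : ∀ i ∈ C, ∀ j ∈ C, i ≠ j → ∀ k, p i j k
      = (if k = σ i then (1:ℝ)/2 else 0) + (if k = σ j then (1:ℝ)/2 else 0) :=
    fun i hi j hj hij k => hhalf i j hij (fun h => hij (hinjC i hi j hj h)) k
  have hwsupp : ∀ i, i ∉ C → w i = 0 := by
    intro i hi; simp only [hwdef]; rw [if_neg hi]
  have hwconst : ∀ i ∈ C, w (σ i) = w i := by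
    intro i hi; simp only [hwdef]; rw [if_pos (hmapC i hi), if_pos hi]
  have hwfix : QSO p w = w :=
    fix_of_const hdel C hhDC hinjC hsurjC w hwsum hwsupp hwconst
  refine ⟨⟨w, hwΔ, hwfix⟩, ?_⟩
  by_cases hsc : ∀ k', (∃ a, 0 < a ∧ σ^[a] k' = k') → k' ∈ C
  · -- single cycle: unique fixed point
    left
    refine ⟨w, ?_⟩
    apply Set.eq_singleton_iff_unique_mem.mpr
    refine ⟨⟨hwΔ, hwfix⟩, ?_⟩
    rintro x ⟨⟨hx0, hxs⟩, hxfix⟩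
    have hxfix' : ∀ k, QSO p x k = x k := fun k => congrFun hxfix k
    have hqii : ∀ i : Fin m, ∑ k ∈ Cᶜ, p i i k = if σ i ∈ Cᶜ then (1:ℝ) else 0 := by
      intro i
      rw [Finset.sum_congr rfl (fun k _ => hdel i k)]
      exact Finset.sum_ite_eq' Cᶜ (σ i) (fun _ => (1:ℝ))
    have hq_le : ∀ i j : Fin m, ∑ k ∈ Cᶜ, p i j k
        ≤ ((if i ∈ C then (0:ℝ) else 1) + (if j ∈ C then (0:ℝ) else 1))/2 := by
      intro i j
      by_cases hij : i = j
      · subst hij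
        rw [hqii i]
        by_cases hiC : i ∈ C
        · rw [if_neg (by rw [Finset.mem_compl]; push_neg; exact hmapC i hiC), if_pos hiC]
          norm_num
        · rw [if_neg hiC]
          split <;> norm_num
      · by_cases hss : σ i = σ j
        · by_cases hsC : σ i ∈ C
          · have hcol' := hcol_ge i j hij hss
            have hsub : Cᶜ ⊆ Finset.univ.erase (σ i) := by
              intro k hk
              rw [Finset.mem_erase]
              exact ⟨fun h => (Finset.mem_compl.mp hk) (h ▸ hsC), Finset.mem_univ k⟩
            have h1 : ∑ k ∈ Cᶜ, p i j k ≤ ∑ k ∈ Finset.univ.erase (σ i), p i j k :=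
              Finset.sum_le_sum_of_subset_of_nonneg hsub (fun k _ _ => hnn i j k)
            have h2 : p i j (σ i) + ∑ k ∈ Finset.univ.erase (σ i), p i j k = 1 := by
              rw [Finset.add_sum_erase _ _ (Finset.mem_univ (σ i)), hsum i j]
            have hnotboth : ¬(i ∈ C ∧ j ∈ C) :=
              fun hb => hij (hinjC i hb.1 j hb.2 hss)
            have hchi : (1:ℝ)/2 ≤ ((if i ∈ C then (0:ℝ) else 1) + (if j ∈ C then (0:ℝ) else 1))/2 := by
              by_cases hiC : i ∈ C
              · have hjC : j ∉ C := fun h => hnotboth ⟨hiC, h⟩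
                rw [if_pos hiC, if_neg hjC]; norm_num
              · rw [if_neg hiC]; split <;> norm_num
            linarith
          · have hiC : i ∉ C := fun h => hsC (hmapC i h)
            have hjC : j ∉ C := fun h => hsC (hss ▸ hmapC j h)
            rw [if_neg hiC, if_neg hjC]
            have hsub := Finset.sum_le_sum_of_subset_of_nonneg
              (Finset.subset_univ Cᶜ) (fun k _ _ => hnn i j k)
            rw [hsum i j] at hsub
            linarith
        · have hform : ∑ k ∈ Cᶜ, p i j k
              = (if σ i ∈ Cᶜ then (1:ℝ)/2 else 0) + (if σ j ∈ Cᶜ then (1:ℝ)/2 else 0) := by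
            rw [Finset.sum_congr rfl (fun k _ => hhalf i j hij hss k), Finset.sum_add_distrib,
                Finset.sum_ite_eq' Cᶜ (σ i) (fun _ => (1:ℝ)/2),
                Finset.sum_ite_eq' Cᶜ (σ j) (fun _ => (1:ℝ)/2)]
          rw [hform]
          have b1 : (if σ i ∈ Cᶜ then (1:ℝ)/2 else 0) ≤ (if i ∈ C then (0:ℝ) else 1)/2 := by
            by_cases hiC : i ∈ C
            · rw [if_neg (by rw [Finset.mem_compl]; push_neg; exact hmapC i hiC), if_pos hiC]
              norm_num
            · rw [if_neg hiC]; split <;> norm_num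
          have b2 : (if σ j ∈ Cᶜ then (1:ℝ)/2 else 0) ≤ (if j ∈ C then (0:ℝ) else 1)/2 := by
            by_cases hjC : j ∈ C
            · rw [if_neg (by rw [Finset.mem_compl]; push_neg; exact hmapC j hjC), if_pos hjC]
              norm_num
            · rw [if_neg hjC]; split <;> norm_num
          linarith
    have hsum_q : ∑ i, ∑ j, (∑ k ∈ Cᶜ, p i j k) * (x i * x j) = ∑ k ∈ Cᶜ, x k := by
      have step1 : ∀ i : Fin m, ∑ j, (∑ k ∈ Cᶜ, p i j k) * (x i * x j)
          = ∑ j, ∑ k ∈ Cᶜ, p i j k * x i * x j := by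
        intro i
        refine Finset.sum_congr rfl fun j _ => ?_
        rw [Finset.sum_mul]
        exact Finset.sum_congr rfl fun k _ => by ring
      rw [Finset.sum_congr rfl fun i _ => step1 i]
      have step2 : ∀ i : Fin m, ∑ j, ∑ k ∈ Cᶜ, p i j k * x i * x j
          = ∑ k ∈ Cᶜ, ∑ j, p i j k * x i * x j := fun i => Finset.sum_comm
      rw [Finset.sum_congr rfl fun i _ => step2 i, Finset.sum_comm]
      refine Finset.sum_congr rfl fun k _ => ?_
      rw [← hxfix' k]
      rfl
    have hsum_chi : ∑ i, ∑ j,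
        (((if i ∈ C then (0:ℝ) else 1) + (if j ∈ C then (0:ℝ) else 1))/2) * (x i * x j)
          = ∑ k ∈ Cᶜ, x k := by
      have hpt : ∀ i j : Fin m,
          (((if i ∈ C then (0:ℝ) else 1) + (if j ∈ C then (0:ℝ) else 1))/2) * (x i * x j)
            = (((if i ∈ C then (0:ℝ) else 1)/2) * x i) * x j
              + x i * (((if j ∈ C then (0:ℝ) else 1)/2) * x j) := fun i j => by ring
      rw [Finset.sum_congr rfl fun i _ => Finset.sum_congr rfl fun j _ => hpt i j]
      have hsplit : ∑ i, ∑ j, ((((if i ∈ C then (0:ℝ) else 1)/2) * x i) * x j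
            + x i * (((if j ∈ C then (0:ℝ) else 1)/2) * x j))
          = (∑ i, ((if i ∈ C then (0:ℝ) else 1)/2) * x i) * (∑ j, x j)
            + (∑ i, x i) * (∑ j, ((if j ∈ C then (0:ℝ) else 1)/2) * x j) := by
        rw [Finset.sum_mul, Finset.sum_mul, ← Finset.sum_add_distrib]
        refine Finset.sum_congr rfl fun i _ => ?_
        rw [Finset.sum_add_distrib, ← Finset.mul_sum, ← Finset.mul_sum]
      rw [hsplit, hxs, mul_one, one_mul, ← Finset.sum_add_distrib]
      have hcomb : ∀ i : Fin m, ((if i ∈ C then (0:ℝ) else 1)/2) * x i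
          + ((if i ∈ C then (0:ℝ) else 1)/2) * x i = (if i ∈ Cᶜ then x i else 0) := by
        intro i
        by_cases h : i ∈ C
        · simp [h]
        · simp [h]; ring
      rw [Finset.sum_congr rfl fun i _ => hcomb i, Finset.sum_ite_mem, Finset.univ_inter]
    have hFnn : ∀ i j : Fin m, 0 ≤ (((if i ∈ C then (0:ℝ) else 1) + (if j ∈ C then (0:ℝ) else 1))/2
        - ∑ k ∈ Cᶜ, p i j k) * (x i * x j) :=
      fun i j => mul_nonneg (by linarith [hq_le i j]) (mul_nonneg (hx0 i) (hx0 j))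
    have hFsum : ∑ i, ∑ j, (((if i ∈ C then (0:ℝ) else 1) + (if j ∈ C then (0:ℝ) else 1))/2
        - ∑ k ∈ Cᶜ, p i j k) * (x i * x j) = 0 := by
      have hdist : ∑ i, ∑ j, (((if i ∈ C then (0:ℝ) else 1) + (if j ∈ C then (0:ℝ) else 1))/2
          - ∑ k ∈ Cᶜ, p i j k) * (x i * x j)
          = (∑ i, ∑ j, (((if i ∈ C then (0:ℝ) else 1) + (if j ∈ C then (0:ℝ) else 1))/2) * (x i * x j))
            - ∑ i, ∑ j, (∑ k ∈ Cᶜ, p i j k) * (x i * x j) := by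
        rw [← Finset.sum_sub_distrib]
        refine Finset.sum_congr rfl fun i _ => ?_
        rw [← Finset.sum_sub_distrib]
        exact Finset.sum_congr rfl fun j _ => by ring
      rw [hdist, hsum_chi, hsum_q, sub_self]
    have hFzero : ∀ i j : Fin m, (((if i ∈ C then (0:ℝ) else 1) + (if j ∈ C then (0:ℝ) else 1))/2
        - ∑ k ∈ Cᶜ, p i j k) * (x i * x j) = 0 := by
      have h1 := (Finset.sum_eq_zero_iff_of_nonneg
        (fun i _ => Finset.sum_nonneg fun j _ => hFnn i j)).mp hFsum
      intro i j
      exact (Finset.sum_eq_zero_iff_of_nonneg (fun j _ => hFnn i j)).mp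
        (h1 i (Finset.mem_univ i)) j (Finset.mem_univ j)
    have hstep : ∀ i : Fin m, i ∉ C → 0 < x i → (σ i ∉ C ∧ 0 < x (σ i)) := by
      intro i hiC hxi
      have hdiag := hFzero i i
      have hxx : 0 < x i * x i := mul_pos hxi hxi
      have hcoef : ((if i ∈ C then (0:ℝ) else 1) + (if i ∈ C then (0:ℝ) else 1))/2
          - ∑ k ∈ Cᶜ, p i i k = 0 := by
        rcases mul_eq_zero.mp hdiag with h | h
        · exact h
        · exact absurd h (ne_of_gt hxx)
      rw [if_neg hiC, hqii i] at hcoef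
      have hσiCc : σ i ∈ Cᶜ := by
        by_contra h
        rw [if_neg h] at hcoef
        norm_num at hcoef
      refine ⟨Finset.mem_compl.mp hσiCc, ?_⟩
      have hlow : p i i (σ i) * x i * x i ≤ QSO p x (σ i) := by
        have h1 : p i i (σ i) * x i * x i ≤ ∑ j', p i j' (σ i) * x i * x j' :=
          Finset.single_le_sum (f := fun j' => p i j' (σ i) * x i * x j')
            (fun j' _ => mul_nonneg (mul_nonneg (hnn _ _ _) (hx0 _)) (hx0 _))
            (Finset.mem_univ i)
        refine h1.trans ?_
        exact Finset.single_le_sum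
          (f := fun i' => ∑ j', p i' j' (σ i) * x i' * x j')
          (fun i' _ => Finset.sum_nonneg fun j' _ =>
            mul_nonneg (mul_nonneg (hnn _ _ _) (hx0 _)) (hx0 _))
          (Finset.mem_univ i)
      rw [hxfix' (σ i)] at hlow
      have hp1 : p i i (σ i) = 1 := by rw [hdel i (σ i), if_pos rfl]
      rw [hp1, one_mul] at hlow
      exact lt_of_lt_of_le (mul_pos hxi hxi) hlow
    have hiterstep : ∀ n : ℕ, ∀ i : Fin m, i ∉ C → 0 < x i →
        (σ^[n] i ∉ C ∧ 0 < x (σ^[n] i)) := by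
      intro n
      induction n with
      | zero => intro i h1 h2; simpa using ⟨h1, h2⟩
      | succ n ih =>
        intro i h1 h2
        have h := ih i h1 h2
        rw [Function.iterate_succ_apply']
        exact hstep _ h.1 h.2
    have hsupp : ∀ i, i ∉ C → x i = 0 := by
      intro i hiC
      by_contra hne
      have hxi : 0 < x i := lt_of_le_of_ne (hx0 i) (Ne.symm hne)
      obtain ⟨n, a, ha, hpera⟩ := exists_periodic σ i
      have hmemi : σ^[n] i ∈ C := hsc _ ⟨a, ha, hpera⟩
      exact (hiterstep n i hiC hxi).1 hmemi
    have hind : ∀ k', QSO p x k' = ∑ i, if σ i = k' then x i else 0 :=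
      fun k' => qso_supported hdel C hhDC x hxs hsupp k'
    have hconst_step : ∀ i₀ ∈ C, x (σ i₀) = x i₀ := by
      intro i₀ hi₀
      have h := hind (σ i₀)
      rw [hxfix' (σ i₀)] at h
      rw [h, Finset.sum_eq_single i₀]
      · rw [if_pos rfl]
      · intro b _ hb
        by_cases hbs : σ b = σ i₀
        · rw [if_pos hbs]
          apply hsupp
          intro hbC
          exact hb (hinjC b hbC i₀ hi₀ hbs)
        · rw [if_neg hbs]
      · intro hni; exact absurd (Finset.mem_univ i₀) hni
    have hconst_iter : ∀ n : ℕ, x (σ^[n] k₀) = x k₀ := by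
      intro n
      induction n with
      | zero => simp
      | succ n ih =>
        rw [Function.iterate_succ_apply', hconst_step _ (hiterC k₀ hk₀C n), ih]
    have hconstC : ∀ j ∈ C, x j = x k₀ := by
      intro j hj
      rw [hCdef] at hj
      obtain ⟨n, _, rfl⟩ := Finset.mem_image.mp hj
      exact hconst_iter n
    have hsumC : ∑ j ∈ C, x j = 1 := by
      rw [Finset.sum_subset (Finset.subset_univ C) (fun j _ hj => hsupp j hj)]
      exact hxs
    have hval : x k₀ = ((C.card : ℝ))⁻¹ := by
      have h := hsumC
      rw [Finset.sum_congr rfl hconstC, Finset.sum_const, nsmul_eq_mul] at h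
      rw [inv_eq_one_div, eq_div_iff hNne, mul_comm]
      exact h
    funext j
    simp only [hwdef]
    by_cases hj : j ∈ C
    · rw [if_pos hj, hconstC j hj, hval]
    · rw [if_neg hj]
      exact hsupp j hj
  · -- at least two cycles: infinitely many fixed points
    right
    push_neg at hsc
    obtain ⟨k₁, hperk₁, hk₁C⟩ := hsc
    obtain ⟨L₁, hL₁, hper₁⟩ := hperk₁
    obtain ⟨hmemC', hiterC', hinjC', hsurjC'⟩ := cycle_pack σ k₁ L₁ hL₁ hper₁
    set C' := (Finset.range L₁).image (fun n => σ^[n] k₁) with hC'def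
    have hk₁C' : k₁ ∈ C' := by
      have := hmemC' 0
      simpa using this
    have hmapC' : ∀ i ∈ C', σ i ∈ C' := by
      intro i hi
      have := hiterC' i hi 1
      simpa using this
    have hdisj : ∀ j, j ∈ C → j ∉ C' := by
      intro j hjC hjC'
      rw [hC'def] at hjC'
      obtain ⟨n, hn, rfl⟩ := Finset.mem_image.mp hjC'
      have hback : σ^[L₁ - n] (σ^[n] k₁) = k₁ := by
        rw [← Function.iterate_add_apply, Nat.sub_add_cancel (Finset.mem_range.mp hn).le]
        exact hper₁
      exact hk₁C (hback ▸ hiterC _ hjC (L₁ - n))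
    have hN'ne : (C'.card : ℝ) ≠ 0 := by
      have : 0 < C'.card := Finset.card_pos.mpr ⟨k₁, hk₁C'⟩
      exact_mod_cast this.ne'
    set w' : Fin m → ℝ := fun j => if j ∈ C' then ((C'.card : ℝ))⁻¹ else 0 with hw'def
    have hw'0 : ∀ j, 0 ≤ w' j := by
      intro j; simp only [hw'def]
      split
      · exact inv_nonneg.mpr (Nat.cast_nonneg _)
      · exact le_rfl
    have hw'sum : ∑ j, w' j = 1 := by
      simp only [hw'def]
      exact bary_sum C' ⟨k₁, hk₁C'⟩
    have hD2 : ∀ i ∈ C ∪ C', ∀ j ∈ C ∪ C', σ i = σ j → i = j := by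
      intro i hi j hj hss
      rcases Finset.mem_union.mp hi with hi' | hi' <;> rcases Finset.mem_union.mp hj with hj' | hj'
      · exact hinjC i hi' j hj' hss
      · exact absurd (hmapC' j hj') (by rw [← hss]; exact hdisj (σ i) (hmapC i hi'))
      · exact absurd (hmapC' i hi') (by rw [hss]; exact hdisj (σ j) (hmapC j hj'))
      · exact hinjC' i hi' j hj' hss
    have hD3 : ∀ i ∈ C ∪ C', ∃ j, j ∈ C ∪ C' ∧ σ j = i := by
      intro i hi
      rcases Finset.mem_union.mp hi with hi' | hi'
      · obtain ⟨j, hj, hjs⟩ := hsurjC i hi'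
        exact ⟨j, Finset.mem_union_left _ hj, hjs⟩
      · obtain ⟨j, hj, hjs⟩ := hsurjC' i hi'
        exact ⟨j, Finset.mem_union_right _ hj, hjs⟩
    have hhDU : ∀ i ∈ C ∪ C', ∀ j ∈ C ∪ C', i ≠ j → ∀ k, p i j k
        = (if k = σ i then (1:ℝ)/2 else 0) + (if k = σ j then (1:ℝ)/2 else 0) :=
      fun i hi j hj hij k => hhalf i j hij (fun h => hij (hD2 i hi j hj h)) k
    have hfam : ∀ t : ℝ, 0 ≤ t → t ≤ 1 →
        (fun j => t * w j + (1-t) * w' j) ∈ {x ∈ stdSimplex ℝ (Fin m) | QSO p x = x} := by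
      intro t ht0 ht1
      have hzsum : ∑ j, (t * w j + (1-t) * w' j) = 1 := by
        rw [Finset.sum_add_distrib, ← Finset.mul_sum, ← Finset.mul_sum, hwsum, hw'sum]
        ring
      have hzsupp : ∀ i, i ∉ C ∪ C' → (t * w i + (1-t) * w' i) = 0 := by
        intro i hi
        rw [Finset.mem_union] at hi
        push_neg at hi
        have h1 : w i = 0 := hwsupp i hi.1
        have h2 : w' i = 0 := by simp only [hw'def]; rw [if_neg hi.2]
        rw [h1, h2]; ring
      have hzconst : ∀ i ∈ C ∪ C', (t * w (σ i) + (1-t) * w' (σ i)) = t * w i + (1-t) * w' i := by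
        intro i hi
        rcases Finset.mem_union.mp hi with h | h
        · have e1 : w (σ i) = w i := hwconst i h
          have e2 : w' (σ i) = w' i := by
            simp only [hw'def]
            rw [if_neg (hdisj (σ i) (hmapC i h)), if_neg (hdisj i h)]
          rw [e1, e2]
        · have e1 : w (σ i) = w i := by
            simp only [hwdef]
            have hi1 : i ∉ C := fun hc => hdisj i hc h
            have hi2 : σ i ∉ C := fun hc => hdisj (σ i) hc (hmapC' i h)
            rw [if_neg hi2, if_neg hi1]
          have e2 : w' (σ i) = w' i := by
            simp only [hw'def]
            rw [if_pos (hmapC' i h), if_pos h]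
          rw [e1, e2]
      refine ⟨⟨fun j => ?_, hzsum⟩, ?_⟩
      · exact add_nonneg (mul_nonneg ht0 (hw0 j)) (mul_nonneg (by linarith) (hw'0 j))
      · exact fix_of_const hdel (C ∪ C') hhDU hD2 hD3 _ hzsum hzsupp hzconst
    apply Set.infinite_of_injective_forall_mem
      (f := fun n : ℕ => (fun j => (((n:ℝ)+2))⁻¹ * w j + (1-((n:ℝ)+2)⁻¹) * w' j))
    · intro n n' h
      have h0 := congrFun h k₀
      simp only at h0
      have hwk : w k₀ = ((C.card : ℝ))⁻¹ := by simp only [hwdef]; rw [if_pos hk₀C]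
      have hw'k : w' k₀ = 0 := by simp only [hw'def]; rw [if_neg (hdisj k₀ hk₀C)]
      rw [hwk, hw'k, mul_zero, mul_zero, add_zero, add_zero] at h0
      have hinv : ((n:ℝ)+2)⁻¹ = ((n':ℝ)+2)⁻¹ :=
        mul_right_cancel₀ (inv_ne_zero hNne) h0
      have hcast : ((n:ℝ)+2) = ((n':ℝ)+2) := inv_inj.mp hinv
      have : (n:ℝ) = (n':ℝ) := by linarith
      exact_mod_cast this
    · intro n
      apply hfam
      · positivity
      · have h2 : (1:ℝ) ≤ (n:ℝ) + 2 := by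
          have := Nat.cast_nonneg (α := ℝ) n
          linarith
        exact inv_le_one_of_one_le₀ h2
end

section
/- Let V be a dissipative quadratic stochastic operator on the two-dimensional simplex S² (i.e. m = 3). If V is regular, then its unique fixed point is one of the six points e₁, e₂, e₃, (e₁+e₂)/2, (e₁+e₃)/2, (e₂+e₃)/2. -/
open Finset Filter Topology

lemma QSO_mem_simplex {m : ℕ} {p : Fin m → Fin m → Fin m → ℝ} (hp : IsQSOCoeff p)
    {x : Fin m → ℝ} (hx : x ∈ stdSimplex ℝ (Fin m)) : QSO p x ∈ stdSimplex ℝ (Fin m) := by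
  obtain ⟨hsym, hpos, hstoch⟩ := hp
  obtain ⟨hx0, hx1⟩ := hx
  constructor
  · intro k
    apply Finset.sum_nonneg; intro i _
    apply Finset.sum_nonneg; intro j _
    exact mul_nonneg (mul_nonneg (hpos i j k) (hx0 i)) (hx0 j)
  · calc ∑ k, QSO p x k = ∑ i, ∑ j, ∑ k, p i j k * x i * x j := by
          unfold QSO
          rw [Finset.sum_comm]
          refine Finset.sum_congr rfl fun i _ => ?_
          rw [Finset.sum_comm]
      _ = ∑ i, ∑ j, x i * x j := by
          refine Finset.sum_congr rfl fun i _ => Finset.sum_congr rfl fun j _ => ?_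
          simp_rw [mul_assoc, ← Finset.sum_mul, hstoch, one_mul]
      _ = 1 := by rw [← Finset.sum_mul_sum, hx1, one_mul]

/-- a regular dissipative q.s.o. on the 2-dimensional simplex has its
unique fixed point among `e₁, e₂, e₃` and the three edge midpoints. -/
theorem stmt10 (p : Fin 3 → Fin 3 → Fin 3 → ℝ)
    (hp : IsQSOCoeff p) (hd : IsDissipative p) (xs : Fin 3 → ℝ)
    (hxs : xs ∈ stdSimplex ℝ (Fin 3))
    (hreg : ∀ x ∈ stdSimplex ℝ (Fin 3),
      Tendsto (fun n => (QSO p)^[n] x) atTop (𝓝 xs)) :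
    xs = ![(1 : ℝ), 0, 0] ∨ xs = ![(0 : ℝ), 1, 0] ∨ xs = ![(0 : ℝ), 0, 1] ∨
    xs = ![(1 : ℝ) / 2, 1 / 2, 0] ∨ xs = ![(1 : ℝ) / 2, 0, 1 / 2] ∨
    xs = ![(0 : ℝ), 1 / 2, 1 / 2] := by
  -- the iterates of the first vertex stay in the simplex
  have hv : vertex (0 : Fin 3) ∈ stdSimplex ℝ (Fin 3) := by
    constructor
    · intro i; unfold vertex; split <;> norm_num
    · simp [vertex, Fin.sum_univ_three]
  have hiter : ∀ n, (QSO p)^[n] (vertex (0 : Fin 3)) ∈ stdSimplex ℝ (Fin 3) := by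
    intro n
    induction n with
    | zero => exact hv
    | succ n ih => rw [Function.iterate_succ_apply']; exact QSO_mem_simplex hp ih
  -- some coordinate stays ≥ 1 along the trajectory
  have hbig : ∀ n, ∃ i, (1 : ℝ) ≤ (QSO p)^[n] (vertex (0 : Fin 3)) i := by
    intro n
    induction n with
    | zero => exact ⟨0, by simp [vertex]⟩
    | succ n ih =>
      obtain ⟨i, hi⟩ := ih
      obtain ⟨B, hBcard, hBle⟩ := hd _ (hiter n) {i}
      rw [Finset.card_singleton] at hBcard
      obtain ⟨j, rfl⟩ := Finset.card_eq_one.mp hBcard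
      refine ⟨j, ?_⟩
      rw [Function.iterate_succ_apply']
      simpa using le_trans hi (by simpa using hBle)
  -- pass to the limit using the (continuous) maximum of coordinates
  have htend := hreg _ hv
  have hc : ∀ i : Fin 3,
      Tendsto (fun n => (QSO p)^[n] (vertex (0 : Fin 3)) i) atTop (𝓝 (xs i)) :=
    fun i => (tendsto_pi_nhds.mp htend) i
  have hmax : Tendsto
      (fun n => max ((QSO p)^[n] (vertex (0 : Fin 3)) 0)
        (max ((QSO p)^[n] (vertex (0 : Fin 3)) 1) ((QSO p)^[n] (vertex (0 : Fin 3)) 2)))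
      atTop (𝓝 (max (xs 0) (max (xs 1) (xs 2)))) :=
    (hc 0).max ((hc 1).max (hc 2))
  have hone : (1 : ℝ) ≤ max (xs 0) (max (xs 1) (xs 2)) := by
    refine ge_of_tendsto' hmax fun n => ?_
    obtain ⟨i, hi⟩ := hbig n
    fin_cases i
    · exact le_max_of_le_left hi
    · exact le_max_of_le_right (le_max_of_le_left hi)
    · exact le_max_of_le_right (le_max_of_le_right hi)
  obtain ⟨hnn, hsum⟩ := hxs
  rw [Fin.sum_univ_three] at hsum
  have h0 := hnn 0; have h1 := hnn 1; have h2 := hnn 2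
  rcases le_max_iff.mp hone with h | h
  · left
    funext j; fin_cases j <;> simp <;> linarith
  · rcases le_max_iff.mp h with h | h
    · right; left
      funext j; fin_cases j <;> simp <;> linarith
    · right; right; left
      funext j; fin_cases j <;> simp <;> linarith
end

section
/- Let A be an m × m real matrix such that Ax ∈ S^{m-1} for every x ∈ S^{m-1}, and suppose Ax ≻ x for all x ∈ S^{m-1}. Then every column of A is a standard basis vector; that is, for each i ∈ {1,…,m} there exists k with Ae_i = e_k. -/
open Finset Filter Topology

/-- a linear operator mapping the simplex into itself with `Ax ≻ x` on the
simplex sends every vertex to a vertex (every column of `A` is a standard basis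
vector). -/
theorem stmt12 {m : ℕ} (A : Matrix (Fin m) (Fin m) ℝ)
    (h1 : ∀ x ∈ stdSimplex ℝ (Fin m), A.mulVec x ∈ stdSimplex ℝ (Fin m))
    (h2 : ∀ x ∈ stdSimplex ℝ (Fin m), Majorizes (A.mulVec x) x) :
    ∀ i : Fin m, ∃ k : Fin m, A.mulVec (vertex i) = vertex k := by
  intro i
  have hv : vertex i ∈ stdSimplex ℝ (Fin m) := by
    constructor
    · intro j; unfold vertex; positivity
    · simp [vertex]
  set c := A.mulVec (vertex i) with hc
  have hcs : c ∈ stdSimplex ℝ (Fin m) := h1 _ hv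
  obtain ⟨B, hBcard, hBle⟩ := h2 _ hv {i}
  simp [vertex] at hBle
  rw [Finset.card_singleton, Finset.card_eq_one] at hBcard
  obtain ⟨k, rfl⟩ := hBcard
  simp at hBle
  have hck : c k = 1 := by
    have := hcs.2
    have h1le : c k ≤ 1 := by
      have : c k = (∑ j, c j) - ∑ j ∈ Finset.univ.erase k, c j := by
        rw [← Finset.sum_erase_add _ _ (Finset.mem_univ k)]; ring
      rw [this, hcs.2]
      have : 0 ≤ ∑ j ∈ Finset.univ.erase k, c j :=
        Finset.sum_nonneg fun j _ => hcs.1 j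
      linarith
    linarith
  refine ⟨k, funext fun j => ?_⟩
  unfold vertex
  by_cases hj : j = k
  · simp [hj, hck]
  · simp only [hj, if_false]
    have hsum : ∑ j ∈ Finset.univ.erase k, c j = 0 := by
      have : c k + ∑ j ∈ Finset.univ.erase k, c j = 1 := by
        rw [← hcs.2, ← Finset.add_sum_erase _ _ (Finset.mem_univ k)]
      linarith [hck]
    have := (Finset.sum_eq_zero_iff_of_nonneg fun j _ => hcs.1 j).mp hsum j
      (Finset.mem_erase.mpr ⟨hj, Finset.mem_univ j⟩)
    exact this
end

section
/- Let A be an m × m real matrix such that Ax ∈ S^{m-1} for every x ∈ S^{m-1}, and suppose Ax ≻ x for all x ∈ S^{m-1}. Then either A is a permutation matrix, or there exists a proper nonempty subset β ⊊ {1,…,m} such that A maps the whole simplex into the proper face F_β = {x ∈ S^{m-1} : x_i = 0 for i ∉ β}. -/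
open Finset Filter Topology

/-- a linear operator mapping the simplex into itself with `Ax ≻ x` on the
simplex is either a permutation matrix or maps the whole simplex into a proper face. -/
theorem stmt13 {m : ℕ} (A : Matrix (Fin m) (Fin m) ℝ)
    (h1 : ∀ x ∈ stdSimplex ℝ (Fin m), A.mulVec x ∈ stdSimplex ℝ (Fin m))
    (h2 : ∀ x ∈ stdSimplex ℝ (Fin m), Majorizes (A.mulVec x) x) :
    (∃ σ : Equiv.Perm (Fin m), ∀ i j : Fin m, A i j = if i = σ j then 1 else 0) ∨
    (∃ β : Finset (Fin m), β.Nonempty ∧ β ≠ Finset.univ ∧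
      ∀ x ∈ stdSimplex ℝ (Fin m),
        A.mulVec x ∈ stdSimplex ℝ (Fin m) ∧ ∀ i ∉ β, A.mulVec x i = 0) := by

  classical
  have hcol : ∀ j : Fin m, ∃ k, A k j = 1 ∧ ∀ i, i ≠ k → A i j = 0 := by
    intro j
    set e : Fin m → ℝ := fun i => if i = j then 1 else 0 with he
    have he_mem : e ∈ stdSimplex ℝ (Fin m) := by
      constructor
      · intro i; by_cases h : i = j <;> simp [he, h]
      · simp [he]
    have hcol_eq : ∀ i, A.mulVec e i = A i j := by
      intro i
      simp [Matrix.mulVec, dotProduct, he, mul_ite]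
    have hs := h1 e he_mem
    obtain ⟨B, hBcard, hBsum⟩ := h2 e he_mem {j}
    have hB1 : B.card = 1 := by simpa using hBcard
    obtain ⟨k, hk⟩ := Finset.card_eq_one.mp hB1
    have h1le : (1:ℝ) ≤ A.mulVec e k := by
      have hej : ∑ i ∈ ({j} : Finset (Fin m)), e i = 1 := by simp [he]
      rw [hej, hk] at hBsum
      simpa using hBsum
    have hnn : ∀ i, 0 ≤ A.mulVec e i := hs.1
    have hsum : ∑ i, A.mulVec e i = 1 := hs.2
    have hle : A.mulVec e k ≤ 1 := by
      rw [← hsum]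
      exact Finset.single_le_sum (fun i _ => hnn i) (Finset.mem_univ k)
    have hk1 : A.mulVec e k = 1 := le_antisymm hle h1le
    refine ⟨k, by rw [← hcol_eq k]; exact hk1, ?_⟩
    intro i hik
    have hrest : ∑ i ∈ Finset.univ.erase k, A.mulVec e i = 0 := by
      have h := Finset.add_sum_erase Finset.univ (fun i => A.mulVec e i) (Finset.mem_univ k)
      simp only [hk1, hsum] at h
      linarith
    have hzero : A.mulVec e i = 0 := by
      have := (Finset.sum_eq_zero_iff_of_nonneg
        (fun i _ => hnn i)).mp hrest i (by simp [hik])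
      exact this
    rw [← hcol_eq i]; exact hzero
  choose σ hσ1 hσ0 using hcol
  have hA : ∀ i j, A i j = if i = σ j then 1 else 0 := by
    intro i j
    by_cases h : i = σ j
    · subst h; simp [hσ1]
    · simp [h, hσ0 j i h]
  by_cases hinj : Function.Injective σ
  · left
    exact ⟨Equiv.ofBijective σ (Finite.injective_iff_bijective.mp hinj), hA⟩
  · right
    refine ⟨Finset.image σ Finset.univ, ?_, ?_, ?_⟩
    · obtain ⟨a, b, hab, hne⟩ : ∃ a b, σ a = σ b ∧ a ≠ b := by
        simpa [Function.Injective] using hinj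
      exact ⟨σ a, Finset.mem_image_of_mem σ (Finset.mem_univ a)⟩
    · intro hcontra
      apply hinj
      have : (Finset.univ.image σ).card = (Finset.univ : Finset (Fin m)).card := by rw [hcontra]
      have hio := Finset.injOn_of_card_image_eq this
      intro a b hab
      exact hio (Finset.mem_coe.mpr (Finset.mem_univ a))
        (Finset.mem_coe.mpr (Finset.mem_univ b)) hab
    · intro x hx
      refine ⟨h1 x hx, ?_⟩
      intro i hi
      have : ∀ j, A i j = 0 := by
        intro j
        apply hσ0
        intro hcontra
        exact hi (hcontra ▸ Finset.mem_image_of_mem σ (Finset.mem_univ j))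
      simp [Matrix.mulVec, dotProduct, this]
end

section
/- Let 2 ≤ n ≤ m and let V be a dissipative quadratic stochastic operator on S^{m-1} with coefficients p_{ij,k} such that p_{k+1,k+1,k} = 1 for k = 1,…,n−1, p_{11,n} = 1, and for every k with n+1 ≤ k ≤ m there is no i with p_{ii,k} = 1. Define φ(x) = x₁ + ⋯ + x_n. Then for every x ∈ S^{m-1}, φ(Vx) ≥ φ(x) + ∑_{i=n+1}^m x_i²; in particular the sequence (φ(Vʲx))_{j ≥ 0} is nondecreasing along every trajectory. -/
open Finset Filter Topology

private lemma sum_eq_pair {m : ℕ} {i j : Fin m} (hij : i ≠ j) (f : Fin m → ℝ)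
    (h : ∀ a, a ≠ i → a ≠ j → f a = 0) : ∑ a, f a = f i + f j := by
  rw [← Finset.sum_pair hij]
  exact (Finset.sum_subset (Finset.subset_univ _) (fun a _ ha => by
    simp only [Finset.mem_insert, Finset.mem_singleton, not_or] at ha
    exact h a ha.1 ha.2)).symm

private def twoPt {m : ℕ} (i j : Fin m) (t : ℝ) : Fin m → ℝ :=
  fun a => if a = i then t else if a = j then 1 - t else 0

private lemma twoPt_mem {m : ℕ} {i j : Fin m} (hij : i ≠ j) {t : ℝ} (h0 : 0 ≤ t) (h1 : t ≤ 1) :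
    twoPt i j t ∈ stdSimplex ℝ (Fin m) := by
  refine ⟨fun a => ?_, ?_⟩
  · simp only [twoPt]; split_ifs <;> linarith
  · rw [sum_eq_pair hij _ (fun a ha1 ha2 => by simp [twoPt, ha1, ha2])]
    simp [twoPt, hij.symm]

private lemma qso_twoPt {m : ℕ} (p : Fin m → Fin m → Fin m → ℝ) {i j : Fin m} (hij : i ≠ j)
    (t : ℝ) (k : Fin m) :
    QSO p (twoPt i j t) k =
      p i i k * t * t + p i j k * t * (1 - t) + p j i k * (1 - t) * t
        + p j j k * (1 - t) * (1 - t) := by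
  have hji : j ≠ i := hij.symm
  show ∑ a, ∑ b, p a b k * twoPt i j t a * twoPt i j t b = _
  rw [sum_eq_pair hij _ (fun a ha1 ha2 => Finset.sum_eq_zero fun b _ => by
        simp [twoPt, ha1, ha2])]
  rw [sum_eq_pair hij _ (fun b hb1 hb2 => by simp [twoPt, hb1, hb2])]
  rw [sum_eq_pair hij _ (fun b hb1 hb2 => by simp [twoPt, hb1, hb2])]
  simp only [twoPt, if_neg hji, ite_true, if_pos rfl]
  ring


/-- under the hypotheses of the single-cycle case, the Lyapunov function
`φ(x) = x₁ + ⋯ + x_n` satisfies `φ(Vx) ≥ φ(x) + ∑_{i>n} x_i²`; in particular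
`φ` is nondecreasing along every trajectory. -/
theorem stmt15 {m n : ℕ} (hn : 2 ≤ n) (hnm : n ≤ m)
    (p : Fin m → Fin m → Fin m → ℝ)
    (hp : IsQSOCoeff p) (hd : IsDissipative p)
    (h1 : ∀ k : ℕ, ∀ hk : k + 1 < n,
      p ⟨k + 1, by omega⟩ ⟨k + 1, by omega⟩ ⟨k, by omega⟩ = 1)
    (h2 : p ⟨0, by omega⟩ ⟨0, by omega⟩ ⟨n - 1, by omega⟩ = 1)
    (h3 : ∀ k : ℕ, n ≤ k → ∀ hk : k < m, ∀ i : Fin m, p i i ⟨k, hk⟩ ≠ 1) :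
    (∀ x ∈ stdSimplex ℝ (Fin m),
      (∑ i ∈ Finset.univ.filter fun i : Fin m => (i : ℕ) < n, x i) +
          ∑ i ∈ Finset.univ.filter fun i : Fin m => n ≤ (i : ℕ), (x i) ^ 2 ≤
        ∑ i ∈ Finset.univ.filter fun i : Fin m => (i : ℕ) < n, QSO p x i) ∧
    ∀ x ∈ stdSimplex ℝ (Fin m), ∀ j : ℕ,
      (∑ i ∈ Finset.univ.filter fun i : Fin m => (i : ℕ) < n, ((QSO p)^[j] x) i) ≤
        ∑ i ∈ Finset.univ.filter fun i : Fin m => (i : ℕ) < n,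
          ((QSO p)^[j + 1] x) i := by
  obtain ⟨hsymm, hnn, hst⟩ := hp
  have hple : ∀ i j k, p i j k ≤ 1 := by
    intro i j k
    calc p i j k ≤ ∑ k', p i j k' :=
          Finset.single_le_sum (fun k' _ => hnn i j k') (Finset.mem_univ k)
      _ = 1 := hst i j
  -- V maps the simplex into itself
  have hqso_mem : ∀ x ∈ stdSimplex ℝ (Fin m), QSO p x ∈ stdSimplex ℝ (Fin m) := by
    intro x hx
    obtain ⟨hx1, hx2⟩ := hx
    refine ⟨fun k => ?_, ?_⟩
    · exact Finset.sum_nonneg fun i _ => Finset.sum_nonneg fun j _ =>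
        mul_nonneg (mul_nonneg (hnn i j k) (hx1 i)) (hx1 j)
    · show ∑ k, ∑ i, ∑ j, p i j k * x i * x j = 1
      rw [Finset.sum_comm]
      calc ∑ i, ∑ k, ∑ j, p i j k * x i * x j
          = ∑ i, ∑ j, ∑ k, p i j k * x i * x j :=
            Finset.sum_congr rfl fun i _ => Finset.sum_comm
        _ = ∑ i, ∑ j, x i * x j := by
            refine Finset.sum_congr rfl fun i _ => Finset.sum_congr rfl fun j _ => ?_
            rw [← Finset.sum_mul, ← Finset.sum_mul, hst, one_mul]
        _ = 1 := by simp only [← Finset.mul_sum, hx2, mul_one]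
  -- diagonal coefficients concentrate on a single k < n
  have hdiag : ∀ i : Fin m, ∃ k : Fin m, (k : ℕ) < n ∧ p i i k = 1 := by
    intro i
    have hvm : twoPt i i 1 ∈ stdSimplex ℝ (Fin m) := by
      refine ⟨fun a => ?_, ?_⟩
      · simp only [twoPt]; split_ifs <;> norm_num
      · rw [show ∑ a, twoPt i i 1 a = twoPt i i 1 i from ?_]
        · simp [twoPt]
        · rw [← Finset.sum_singleton (twoPt i i 1) i]
          exact (Finset.sum_subset (Finset.subset_univ _) (fun a _ ha => by
            simp only [Finset.mem_singleton] at ha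
            simp [twoPt, ha])).symm
    have hqv : ∀ k, QSO p (twoPt i i 1) k = p i i k := by
      intro k
      show ∑ a, ∑ b, p a b k * twoPt i i 1 a * twoPt i i 1 b = _
      have hred : ∀ f : Fin m → ℝ, (∀ a, a ≠ i → f a = 0) → ∑ a, f a = f i := by
        intro f hf
        rw [← Finset.sum_singleton f i]
        exact (Finset.sum_subset (Finset.subset_univ _) (fun a _ ha => by
          simp only [Finset.mem_singleton] at ha
          exact hf a ha)).symm
      rw [hred _ (fun a ha => Finset.sum_eq_zero fun b _ => by simp [twoPt, ha])]
      rw [hred _ (fun b hb => by simp [twoPt, hb])]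
      simp [twoPt]
    obtain ⟨B, hBc, hBs⟩ := hd _ hvm {i}
    obtain ⟨k, rfl⟩ := Finset.card_eq_one.mp (by rw [hBc, Finset.card_singleton])
    rw [Finset.sum_singleton, Finset.sum_singleton, hqv] at hBs
    have hxi : twoPt i i 1 i = 1 := by simp [twoPt]
    rw [hxi] at hBs
    have hk1 : p i i k = 1 := le_antisymm (hple i i k) hBs
    refine ⟨k, ?_, hk1⟩
    by_contra hge
    exact h3 (k : ℕ) (by omega) k.isLt i (by rwa [Fin.eta])

  choose sig hsiglt hsig1 using hdiag
  -- off-sigma diagonal coefficients vanish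
  have hzero : ∀ i k, k ≠ sig i → p i i k = 0 := by
    intro i k hk
    have hsub : p i i (sig i) + p i i k ≤ ∑ k', p i i k' := by
      rw [← Finset.sum_pair (Ne.symm hk)]
      exact Finset.sum_le_sum_of_subset_of_nonneg (Finset.subset_univ _)
        (fun a _ _ => hnn i i a)
    rw [hst, hsig1] at hsub
    have := hnn i i k
    linarith
  have huniq : ∀ i k, p i i k = 1 → sig i = k := by
    intro i k h
    by_contra hne
    rw [hzero i k (fun he => hne he.symm)] at h
    norm_num at h
  have hsig0 : ∀ i : Fin m, (i : ℕ) = 0 → (sig i : ℕ) = n - 1 := by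
    intro i h0
    obtain ⟨v, hv⟩ := i
    simp only at h0 ⊢
    subst h0
    have := huniq _ ⟨n - 1, by omega⟩ h2
    rw [this]
  have hsigpos : ∀ i : Fin m, 1 ≤ (i : ℕ) → (i : ℕ) < n → (sig i : ℕ) = (i : ℕ) - 1 := by
    intro i h1i hilt
    obtain ⟨v, hv⟩ := i
    simp only at h1i hilt ⊢
    have hi : (⟨v, hv⟩ : Fin m) = ⟨v - 1 + 1, by omega⟩ :=
      Fin.ext (show v = v - 1 + 1 by omega)
    rw [hi]
    have := huniq _ ⟨v - 1, by omega⟩ (h1 (v - 1) (by omega))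
    rw [this]
  have hsiginj : ∀ i j : Fin m, (i : ℕ) < n → (j : ℕ) < n → i ≠ j → sig i ≠ sig j := by
    intro i j hi hj hij heq
    have hvij : (i : ℕ) ≠ (j : ℕ) := fun h => hij (Fin.ext h)
    have hveq : (sig i : ℕ) = (sig j : ℕ) := by rw [heq]
    rcases Nat.eq_zero_or_pos (i : ℕ) with h0 | h0 <;>
      rcases Nat.eq_zero_or_pos (j : ℕ) with h0' | h0'
    · omega
    · have e1 := hsig0 i h0; have e2 := hsigpos j h0' hj; omega
    · have e1 := hsigpos i h0 hi; have e2 := hsig0 j h0'; omega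
    · have e1 := hsigpos i h0 hi; have e2 := hsigpos j h0' hj; omega
  -- Case A : distinct sigmas give total mass below n
  have hcaseA : ∀ i j : Fin m, i ≠ j → sig i ≠ sig j →
      ∑ k ∈ Finset.univ.filter (fun k : Fin m => (k : ℕ) < n), p i j k = 1 := by
    intro i j hij hss
    have hx : twoPt i j (1/2) ∈ stdSimplex ℝ (Fin m) :=
      twoPt_mem hij (by norm_num) (by norm_num)
    obtain ⟨B, hBc, hBs⟩ := hd _ hx {i, j}
    have hAx : ∑ a ∈ ({i, j} : Finset (Fin m)), twoPt i j (1/2) a = 1 := by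
      rw [Finset.sum_pair hij]
      simp [twoPt, hij.symm]
    rw [hAx] at hBs
    have hmemtot := hqso_mem _ hx
    have hout : ∀ k, k ∉ B → QSO p (twoPt i j (1/2)) k = 0 := by
      intro k hk
      have hsplit := Finset.sum_sdiff (Finset.subset_univ B)
        (f := QSO p (twoPt i j (1/2)))
      rw [hmemtot.2] at hsplit
      have hz : ∑ a ∈ Finset.univ \ B, QSO p (twoPt i j (1/2)) a = 0 :=
        le_antisymm (by linarith)
          (Finset.sum_nonneg fun a _ => hmemtot.1 a)
      exact (Finset.sum_eq_zero_iff_of_nonneg (fun a _ => hmemtot.1 a)).mp hz k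
        (Finset.mem_sdiff.mpr ⟨Finset.mem_univ k, hk⟩)
    have hmemB : ∀ a, 0 < QSO p (twoPt i j (1/2)) a → a ∈ B := by
      intro a ha
      by_contra h
      rw [hout a h] at ha
      exact lt_irrefl 0 ha
    have hsi : sig i ∈ B := by
      apply hmemB
      rw [qso_twoPt p hij]
      have e1 := hsig1 i
      have e2 := hnn i j (sig i); have e3 := hnn j i (sig i); have e4 := hnn j j (sig i)
      nlinarith
    have hsj : sig j ∈ B := by
      apply hmemB
      rw [qso_twoPt p hij]
      have e1 := hsig1 j
      have e2 := hnn i j (sig j); have e3 := hnn j i (sig j); have e4 := hnn i i (sig j)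
      nlinarith
    have hBeq : ({sig i, sig j} : Finset (Fin m)) = B := by
      apply Finset.eq_of_subset_of_card_le
      · intro a ha
        rcases Finset.mem_insert.mp ha with rfl | ha
        · exact hsi
        · rw [Finset.mem_singleton.mp ha]; exact hsj
      · rw [hBc, Finset.card_pair hij, Finset.card_pair hss]
    have hpz : ∀ k, k ≠ sig i → k ≠ sig j → p i j k = 0 := by
      intro k hk1 hk2
      have hkB : k ∉ B := by
        rw [← hBeq]
        simp [hk1, hk2]
      have h0 := hout k hkB
      rw [qso_twoPt p hij, hzero i k hk1, hzero j k hk2, hsymm j i] at h0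
      have := hnn i j k
      nlinarith
    rw [← hst i j]
    apply Finset.sum_subset (Finset.filter_subset _ _)
    intro k _ hkK
    simp only [Finset.mem_filter, Finset.mem_univ, true_and, not_lt] at hkK
    exact hpz k (fun he => by have := hsiglt i; omega)
      (fun he => by have := hsiglt j; omega)

  -- Case B : equal sigmas still give mass ≥ 1/2 at sigma
  have hcaseB : ∀ i j : Fin m, i ≠ j → sig i = sig j → (1:ℝ)/2 ≤ p i j (sig i) := by
    intro i j hij hss
    by_contra hlt
    push_neg at hlt
    set s := p i j (sig i) with hs_def
    have hs0 : 0 ≤ s := hnn i j (sig i)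
    set u : ℝ := 1 - s with hu_def
    have hu : 1/2 < u := by simp only [hu_def]; linarith
    have hu1 : u ≤ 1 := by simp only [hu_def]; linarith
    set t : ℝ := (1 / (2*u) + 1) / 2 with ht_def
    have h2u : (0:ℝ) < 2 * u := by linarith
    have hfrac1 : 1 / (2*u) < 1 := (div_lt_one h2u).mpr (by linarith)
    have hfrac0 : 0 < 1 / (2*u) := by positivity
    have ht1 : t < 1 := by simp only [ht_def]; linarith
    have ht2 : 1/2 < t := by simp only [ht_def]; linarith
    have htu : 1 < 2 * t * u := by
      have : 1 / (2*u) < t := by simp only [ht_def]; linarith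
      have := (div_lt_iff₀ h2u).mp this
      linarith
    have hx : twoPt i j t ∈ stdSimplex ℝ (Fin m) :=
      twoPt_mem hij (by linarith) (by linarith)
    obtain ⟨B, hBc, hBs⟩ := hd _ hx {i}
    obtain ⟨k, rfl⟩ := Finset.card_eq_one.mp (by rw [hBc, Finset.card_singleton])
    rw [Finset.sum_singleton, Finset.sum_singleton] at hBs
    have hxi : twoPt i j t i = t := by simp [twoPt]
    rw [hxi, qso_twoPt p hij] at hBs
    by_cases hks : k = sig i
    · subst hks
      rw [hsig1 i, hsymm j i, ← hs_def, hss, hsig1 j] at hBs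
      nlinarith [mul_pos (by linarith : (0:ℝ) < 1 - t) (by linarith : (0:ℝ) < 2*t*u - 1)]
    · rw [hzero i k hks, hzero j k (by rw [← hss]; exact hks), hsymm j i] at hBs
      nlinarith [mul_nonneg (by linarith [hple i j k] : (0:ℝ) ≤ 1 - p i j k)
          (by nlinarith : (0:ℝ) ≤ t * (1-t)),
        mul_pos (by linarith : (0:ℝ) < t) (by linarith : (0:ℝ) < 2*t - 1),
        hnn i j k]
  -- coefficient comparison
  have hqdi : ∀ i : Fin m,
      (1:ℝ) ≤ ∑ k ∈ Finset.univ.filter (fun k : Fin m => (k : ℕ) < n), p i i k := by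
    intro i
    calc (1:ℝ) = p i i (sig i) := (hsig1 i).symm
      _ ≤ _ := Finset.single_le_sum (f := fun k => p i i k) (fun k _ => hnn i i k)
          (Finset.mem_filter.mpr ⟨Finset.mem_univ _, hsiglt i⟩)
  have hqoff : ∀ i j : Fin m, i ≠ j →
      (1:ℝ)/2 ≤ ∑ k ∈ Finset.univ.filter (fun k : Fin m => (k : ℕ) < n), p i j k := by
    intro i j hij
    by_cases hss : sig i = sig j
    · calc (1:ℝ)/2 ≤ p i j (sig i) := hcaseB i j hij hss
        _ ≤ _ := Finset.single_le_sum (f := fun k => p i j k) (fun k _ => hnn i j k)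
            (Finset.mem_filter.mpr ⟨Finset.mem_univ _, hsiglt i⟩)
    · rw [hcaseA i j hij hss]; norm_num
  have hq : ∀ i j : Fin m,
      ((if (i : ℕ) < n then (1:ℝ) else if i = j then 1 else 0) +
        (if (j : ℕ) < n then (1:ℝ) else if j = i then 1 else 0)) ≤
      (∑ k ∈ Finset.univ.filter (fun k : Fin m => (k : ℕ) < n), p i j k) +
        ∑ k ∈ Finset.univ.filter (fun k : Fin m => (k : ℕ) < n), p j i k := by
    intro i j
    have hqsym : ∑ k ∈ Finset.univ.filter (fun k : Fin m => (k : ℕ) < n), p j i k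
        = ∑ k ∈ Finset.univ.filter (fun k : Fin m => (k : ℕ) < n), p i j k :=
      Finset.sum_congr rfl fun k _ => hsymm j i k
    rw [hqsym]
    by_cases hij : i = j
    · subst hij
      have hc : (if (i : ℕ) < n then (1:ℝ) else if i = i then 1 else 0) = 1 := by
        split_ifs with ha hb
        · rfl
        · rfl
        · exact absurd rfl hb
      rw [hc]
      have := hqdi i
      linarith
    · by_cases hi : (i : ℕ) < n <;> by_cases hj : (j : ℕ) < n
      · rw [if_pos hi, if_pos hj, hcaseA i j hij (hsiginj i j hi hj hij)]
      · rw [if_pos hi, if_neg hj, if_neg (fun h => hij h.symm)]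
        have := hqoff i j hij
        linarith
      · rw [if_neg hi, if_pos hj, if_neg hij]
        have := hqoff i j hij
        linarith
      · rw [if_neg hi, if_neg hj, if_neg hij, if_neg (fun h => hij h.symm)]
        have := hqoff i j hij
        linarith

  have key : ∀ x ∈ stdSimplex ℝ (Fin m),
      (∑ i ∈ Finset.univ.filter fun i : Fin m => (i : ℕ) < n, x i) +
          ∑ i ∈ Finset.univ.filter fun i : Fin m => n ≤ (i : ℕ), (x i) ^ 2 ≤
        ∑ i ∈ Finset.univ.filter fun i : Fin m => (i : ℕ) < n, QSO p x i := by
    intro x hx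
    obtain ⟨hx1, hx2⟩ := hx
    have hRHS : ∑ k ∈ Finset.univ.filter (fun k : Fin m => (k : ℕ) < n), QSO p x k
        = ∑ i : Fin m, ∑ j : Fin m, (∑ k ∈ Finset.univ.filter (fun k : Fin m => (k : ℕ) < n), p i j k) * (x i * x j) := by
      calc ∑ k ∈ Finset.univ.filter (fun k : Fin m => (k : ℕ) < n), QSO p x k
          = ∑ k ∈ Finset.univ.filter (fun k : Fin m => (k : ℕ) < n), ∑ i : Fin m, ∑ j : Fin m, p i j k * x i * x j := rfl
        _ = ∑ i, ∑ k ∈ Finset.univ.filter (fun k : Fin m => (k : ℕ) < n), ∑ j, p i j k * x i * x j := Finset.sum_comm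
        _ = ∑ i : Fin m, ∑ j : Fin m, ∑ k ∈ Finset.univ.filter (fun k : Fin m => (k : ℕ) < n), p i j k * x i * x j :=
            Finset.sum_congr rfl fun i _ => Finset.sum_comm
        _ = _ := by
            refine Finset.sum_congr rfl fun i _ => Finset.sum_congr rfl fun j _ => ?_
            rw [Finset.sum_mul]
            exact Finset.sum_congr rfl fun k _ => by ring
    have hLHS : (∑ i ∈ Finset.univ.filter fun i : Fin m => (i : ℕ) < n, x i) +
          (∑ i ∈ Finset.univ.filter fun i : Fin m => n ≤ (i : ℕ), (x i) ^ 2)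
        = ∑ i : Fin m, ∑ j : Fin m, (if (i : ℕ) < n then (1:ℝ) else if i = j then 1 else 0) * (x i * x j) := by
      have hfe : (Finset.univ.filter fun i : Fin m => n ≤ (i : ℕ))
          = Finset.univ.filter (fun i : Fin m => ¬ (i : ℕ) < n) := by
        apply Finset.filter_congr
        intro i _
        simp [not_lt]
      have hsplit := Finset.sum_filter_add_sum_filter_not Finset.univ
        (fun i : Fin m => (i : ℕ) < n)
        (fun i => ∑ j : Fin m, (if (i : ℕ) < n then (1:ℝ) else if i = j then 1 else 0) * (x i * x j))
      rw [← hsplit]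
      congr 1
      · apply Finset.sum_congr rfl
        intro i hi
        rw [Finset.mem_filter] at hi
        calc x i = x i * ∑ j, x j := by rw [hx2, mul_one]
          _ = ∑ j, x i * x j := Finset.mul_sum _ _ _
          _ = ∑ j : Fin m, (if (i : ℕ) < n then (1:ℝ) else if i = j then 1 else 0) * (x i * x j) :=
            Finset.sum_congr rfl fun j _ => by rw [if_pos hi.2, one_mul]
      · rw [hfe]
        apply Finset.sum_congr rfl
        intro i hi
        rw [Finset.mem_filter] at hi
        calc (x i) ^ 2 = if i ∈ Finset.univ then x i * x i else 0 := by
              rw [if_pos (Finset.mem_univ i), sq]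
          _ = ∑ j, if i = j then x i * x j else 0 := (Finset.sum_ite_eq Finset.univ i (fun j => x i * x j)).symm
          _ = ∑ j : Fin m, (if (i : ℕ) < n then (1:ℝ) else if i = j then 1 else 0) * (x i * x j) := by
              refine Finset.sum_congr rfl fun j _ => ?_
              rw [if_neg hi.2]
              split_ifs <;> ring
    have hsymmsum : ∀ d : Fin m → Fin m → ℝ,
        ∑ i : Fin m, ∑ j : Fin m, d i j * (x i * x j) = ∑ i : Fin m, ∑ j : Fin m, d j i * (x i * x j) := by
      intro d
      rw [Finset.sum_comm]
      exact Finset.sum_congr rfl fun i _ => Finset.sum_congr rfl fun j _ => by ring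
    have hexpand : ∀ d : Fin m → Fin m → ℝ,
        ∑ i : Fin m, ∑ j : Fin m, (d i j + d j i) * (x i * x j)
          = 2 * ∑ i : Fin m, ∑ j : Fin m, d i j * (x i * x j) := by
      intro d
      simp only [add_mul, Finset.sum_add_distrib]
      rw [← hsymmsum d, two_mul]
    have e1 : ∑ i : Fin m, ∑ j : Fin m, ((if (i : ℕ) < n then (1:ℝ) else if i = j then 1 else 0) + (if (j : ℕ) < n then (1:ℝ) else if j = i then 1 else 0)) * (x i * x j)
        = 2 * ∑ i : Fin m, ∑ j : Fin m, (if (i : ℕ) < n then (1:ℝ) else if i = j then 1 else 0) * (x i * x j) := hexpand _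
    have e2 : ∑ i : Fin m, ∑ j : Fin m, ((∑ k ∈ Finset.univ.filter (fun k : Fin m => (k : ℕ) < n), p i j k) + ∑ k ∈ Finset.univ.filter (fun k : Fin m => (k : ℕ) < n), p j i k) * (x i * x j)
        = 2 * ∑ i : Fin m, ∑ j : Fin m, (∑ k ∈ Finset.univ.filter (fun k : Fin m => (k : ℕ) < n), p i j k) * (x i * x j) := hexpand _
    have hterm : ∑ i : Fin m, ∑ j : Fin m, ((if (i : ℕ) < n then (1:ℝ) else if i = j then 1 else 0) + (if (j : ℕ) < n then (1:ℝ) else if j = i then 1 else 0)) * (x i * x j)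
        ≤ ∑ i : Fin m, ∑ j : Fin m, ((∑ k ∈ Finset.univ.filter (fun k : Fin m => (k : ℕ) < n), p i j k) + ∑ k ∈ Finset.univ.filter (fun k : Fin m => (k : ℕ) < n), p j i k) * (x i * x j) :=
      Finset.sum_le_sum fun i _ => Finset.sum_le_sum fun j _ =>
        mul_le_mul_of_nonneg_right (hq i j) (mul_nonneg (hx1 i) (hx1 j))
    rw [hLHS, hRHS]
    linarith
  refine ⟨key, ?_⟩
  intro x hx j
  have hiter : ∀ jj : ℕ, (QSO p)^[jj] x ∈ stdSimplex ℝ (Fin m) := by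
    intro jj
    induction jj with
    | zero => simpa using hx
    | succ jj ih => rw [Function.iterate_succ_apply']; exact hqso_mem _ ih
  have hk := key _ (hiter j)
  have hnn2 : 0 ≤ ∑ i ∈ Finset.univ.filter fun i : Fin m => n ≤ (i : ℕ),
      (((QSO p)^[j] x) i) ^ 2 := Finset.sum_nonneg fun i _ => sq_nonneg _
  rw [show j + 1 = j + 1 from rfl, Function.iterate_succ_apply']
  linarith
end
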